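/- arXiv:1507.05338 — 6 statements merged into one kernel-verified Lean document; each statement's English description precedes it below -/
import Mathlib

section
/- Every graph on n vertices with more than (k-2)n/2 edges contains a path on k vertices. -/
set_option linter.unusedSectionVars false
set_option linter.unusedVariables false
set_option maxHeartbeats 1000000

open List

namespace ErdosGallaiAux

variable {V : Type*}

/-- A good list: nonempty, consecutive adjacency, no duplicates;
i.e. the support of a path. -/
def Good (G : SimpleGraph V) (L : List V) : Prop :=
  L ≠ [] ∧ L.Chain' G.Adj ∧ L.Nodup

lemma flip_adj (G : SimpleGraph V) : flip G.Adj = G.Adj := by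
  funext x y; exact propext ⟨fun h => h.symm, fun h => h.symm⟩

lemma exists_walk_of_chain' (G : SimpleGraph V) :
    ∀ (L : List V), L ≠ [] → L.Chain' G.Adj →
      ∃ (a b : V) (p : G.Walk a b), p.support = L := by
  intro L
  induction L with
  | nil => simp
  | cons a t ih =>
    intro _ hc
    cases t with
    | nil => exact ⟨a, a, SimpleGraph.Walk.nil, rfl⟩
    | cons b t' =>
      obtain ⟨u, v, p, hp⟩ := ih (by simp) (hc.tail)
      have hu : u = b := by
        have := p.support_eq_cons
        rw [hp] at this
        exact (List.cons.injEq _ _ _ _ ▸ this).1.symm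
      subst hu
      have hab : G.Adj a u := (List.isChain_cons.mp hc).1 u (by rw [← hp, p.support_eq_cons]; rfl)
      exact ⟨a, v, SimpleGraph.Walk.cons hab p, by simp [hp]⟩

lemma exists_path_of_good (G : SimpleGraph V) (L : List V) (hg : Good G L) :
    ∃ (u v : V) (p : G.Walk u v), p.IsPath ∧ p.length + 1 = L.length := by
  obtain ⟨hne, hc, hnd⟩ := hg
  obtain ⟨a, b, p, hp⟩ := exists_walk_of_chain' G L hne hc
  refine ⟨a, b, p, ?_, ?_⟩
  · rw [SimpleGraph.Walk.isPath_def, hp]; exact hnd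
  · rw [← p.length_support, hp]

/-- Rotation surgery: from a "maximal-path-like" list plus a chord structure and an
outside vertex attached at position `j`, build a good list one longer. -/
lemma surgery (G : SimpleGraph V) (L : List V) (d0 : V) (l i j : ℕ)
    (hlen : L.length = l + 1) (hc : L.Chain' G.Adj) (hnd : L.Nodup)
    (hi : i < l) (hj : j ≤ l)
    (hAi : G.Adj (L.getD 0 d0) (L.getD (i + 1) d0))
    (hBi : G.Adj (L.getD l d0) (L.getD i d0))
    (w' : V) (hw' : w' ∉ L) (hadjw : G.Adj w' (L.getD j d0)) :
    ∃ M : List V, Good G M ∧ M.length = l + 2 := by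
  set x : ℕ → V := fun n => L.getD n d0 with hx
  have hne : L ≠ [] := by intro h; rw [h] at hlen; simp at hlen
  have hxe : ∀ {t : ℕ} (ht : t < L.length), L[t] = x t :=
    fun ht => (List.getD_eq_getElem L d0 ht).symm
  have hhd : ∀ t, t ≤ l → (L.drop t).head? = some (x t) := by
    intro t ht
    rw [List.head?_drop, List.getElem?_eq_getElem (by omega), hxe]
  have hh0 : L.head? = some (x 0) := by simpa using hhd 0 (by omega)
  have hlt : ∀ t, t ≤ l → (L.take (t + 1)).getLast? = some (x t) := by
    intro t ht
    rw [List.getLast?_take, if_neg (by omega), List.getElem?_eq_getElem (by omega), hxe]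
    simp
  have hlast : L.getLast? = some (x l) := by
    have h1 : L.length - 1 = l := by omega
    rw [List.getLast?_eq_getLast hne, List.getLast_eq_getElem, hxe (by omega), h1]
  have hld : ∀ t, t ≤ l → (L.drop t).getLast? = some (x l) := by
    intro t ht
    rw [List.getLast?_drop, if_neg (by omega), hlast]
  have hht : ∀ t : ℕ, (L.take (t + 1)).head? = some (x 0) := by
    intro t
    rw [List.head?_take, if_neg (by omega), hh0]
  have hcinf : ∀ {M : List V}, M <:+: L → M.Chain' G.Adj := fun h => hc.infix h
  rcases le_or_gt j i with hji | hji
  · -- j ≤ i : M = w' :: [x_j ... x_0] ++ ([x_{i+1} ... x_l] ++ [x_i ... x_{j+1}])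
    set S1 := (L.take (j + 1)).reverse with hS1
    set S2 := L.drop (i + 1) with hS2
    set S3 := ((L.drop (j + 1)).take (i - j)).reverse with hS3
    have hdd : (L.drop (j+1)).drop (i - j) = L.drop (i+1) := by
      rw [List.drop_drop]; congr 1; omega
    have hsplit2 : (L.drop (j+1)).take (i - j) ++ L.drop (i+1) = L.drop (j+1) := by
      rw [← hdd]; exact List.take_append_drop _ _
    have hperm : (S1 ++ (S2 ++ S3)) ~ L := by
      calc S1 ++ (S2 ++ S3)
          ~ L.take (j+1) ++ (S2 ++ (L.drop (j+1)).take (i - j)) :=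
            List.Perm.append (List.reverse_perm _)
              (List.Perm.append (List.Perm.refl _) (List.reverse_perm _))
        _ ~ L.take (j+1) ++ ((L.drop (j+1)).take (i - j) ++ S2) :=
            List.Perm.append_left _ List.perm_append_comm
        _ = L.take (j+1) ++ L.drop (j+1) := by rw [hS2, hsplit2]
        _ = L := List.take_append_drop _ _
    have hperm' := List.Perm.cons w' hperm
    refine ⟨w' :: (S1 ++ (S2 ++ S3)), ⟨by simp, ?_, ?_⟩, ?_⟩
    · refine List.isChain_cons.mpr ⟨?_, ?_⟩
      · intro y hy
        rw [List.head?_append, List.head?_reverse, hlt j (by omega)] at hy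
        simp only [Option.some_or, Option.mem_some_iff] at hy
        subst hy; exact hadjw
      · refine List.IsChain.append ?_ (List.IsChain.append ?_ ?_ ?_) ?_
        · rw [List.isChain_reverse, show (fun a b => G.Adj b a) = G.Adj from flip_adj G]; exact hcinf (L.take_prefix _).isInfix
        · exact hcinf (L.drop_suffix _).isInfix
        · rw [List.isChain_reverse, show (fun a b => G.Adj b a) = G.Adj from flip_adj G]
          exact hcinf (((L.drop (j+1)).take_prefix _).isInfix.trans (L.drop_suffix _).isInfix)
        · -- junction S2 → S3
          intro a ha y hy
          rw [hS2, hld (i+1) (by omega)] at ha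
          simp only [Option.mem_some_iff] at ha
          subst ha
          rcases Nat.eq_or_lt_of_le hji with rfl | hji'
          · simp [hS3] at hy
          · rw [hS3, List.head?_reverse, List.getLast?_take, if_neg (by omega),
              List.getElem?_eq_getElem (by rw [List.length_drop]; omega),
              List.getElem_drop, hxe (by omega)] at hy
            have heq : j + 1 + (i - j - 1) = i := by omega
            rw [heq] at hy
            simp only [Option.some_or, Option.mem_some_iff] at hy
            subst hy
            exact hBi
        · -- junction S1 → (S2 ++ S3)
          intro a ha y hy
          rw [hS1, List.getLast?_reverse, hht j] at ha
          simp only [Option.mem_some_iff] at ha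
          subst ha
          rw [List.head?_append, hS2, hhd (i+1) (by omega)] at hy
          simp only [Option.some_or, Option.mem_some_iff] at hy
          subst hy
          exact hAi
    · exact hperm'.symm.nodup (List.nodup_cons.mpr ⟨hw', hnd⟩)
    · rw [hperm'.length_eq, List.length_cons, hlen]
  · -- i < j : M = w' :: [x_j ... x_l] ++ ([x_i ... x_0] ++ [x_{i+1} ... x_{j-1}])
    set S1 := L.drop j with hS1
    set S2 := (L.take (i + 1)).reverse with hS2
    set S3 := (L.drop (i + 1)).take (j - (i + 1)) with hS3
    have hdd : (L.drop (i+1)).drop (j - (i+1)) = L.drop j := by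
      rw [List.drop_drop]; congr 1; omega
    have hsplit2 : S3 ++ L.drop j = L.drop (i+1) := by
      rw [hS3, ← hdd]; exact List.take_append_drop _ _
    have hperm : (S1 ++ (S2 ++ S3)) ~ L := by
      calc S1 ++ (S2 ++ S3)
          ~ S1 ++ (L.take (i+1) ++ S3) :=
            List.Perm.append_left _ (List.Perm.append (List.reverse_perm _) (List.Perm.refl _))
        _ ~ (L.take (i+1) ++ S3) ++ S1 := List.perm_append_comm
        _ = L.take (i+1) ++ (S3 ++ S1) := List.append_assoc _ _ _
        _ = L.take (i+1) ++ L.drop (i+1) := by rw [hS1, hsplit2]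
        _ = L := List.take_append_drop _ _
    have hperm' := List.Perm.cons w' hperm
    refine ⟨w' :: (S1 ++ (S2 ++ S3)), ⟨by simp, ?_, ?_⟩, ?_⟩
    · refine List.isChain_cons.mpr ⟨?_, ?_⟩
      · intro y hy
        rw [List.head?_append, hS1, hhd j hj] at hy
        simp only [Option.some_or, Option.mem_some_iff] at hy
        subst hy; exact hadjw
      · refine List.IsChain.append ?_ (List.IsChain.append ?_ ?_ ?_) ?_
        · exact hcinf (L.drop_suffix _).isInfix
        · rw [List.isChain_reverse, show (fun a b => G.Adj b a) = G.Adj from flip_adj G]; exact hcinf (L.take_prefix _).isInfix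
        · exact hcinf (((L.drop (i+1)).take_prefix _).isInfix.trans (L.drop_suffix _).isInfix)
        · -- junction S2 → S3
          intro a ha y hy
          rw [hS2, List.getLast?_reverse, hht i] at ha
          simp only [Option.mem_some_iff] at ha
          subst ha
          rcases Nat.eq_or_lt_of_le hji with hji' | hji'
          · have h0 : j - (i+1) = 0 := by omega
            simp [hS3, h0] at hy
          · rw [hS3, List.head?_take, if_neg (by omega), hhd (i+1) (by omega)] at hy
            simp only [Option.mem_some_iff] at hy
            subst hy
            exact hAi
        · -- junction S1 → (S2 ++ S3)
          intro a ha y hy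
          rw [hS1, hld j hj] at ha
          simp only [Option.mem_some_iff] at ha
          subst ha
          rw [List.head?_append, hS2, List.head?_reverse, hlt i (by omega)] at hy
          simp only [Option.some_or, Option.mem_some_iff] at hy
          subst hy
          exact hBi
    · exact hperm'.symm.nodup (List.nodup_cons.mpr ⟨hw', hnd⟩)
    · rw [hperm'.length_eq, List.length_cons, hlen]

variable [Fintype V] [DecidableEq V]

/-- The support (non-isolated vertices) of a graph, as a finset. -/
def gsupp (G : SimpleGraph V) [DecidableRel G.Adj] : Finset V :=
  Finset.univ.filter (fun x => ∃ y, G.Adj x y)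

lemma mem_gsupp {G : SimpleGraph V} [DecidableRel G.Adj] {x : V} :
    x ∈ gsupp G ↔ ∃ y, G.Adj x y := by simp [gsupp]

lemma adj_mem_gsupp {G : SimpleGraph V} [DecidableRel G.Adj] {x y : V} (h : G.Adj x y) :
    x ∈ gsupp G := mem_gsupp.mpr ⟨y, h⟩

lemma degree_eq_zero_of_not_mem_gsupp {G : SimpleGraph V} [DecidableRel G.Adj] {x : V}
    (h : x ∉ gsupp G) : G.degree x = 0 := by
  rw [← SimpleGraph.card_neighborFinset_eq_degree, Finset.card_eq_zero]
  ext y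
  simp only [SimpleGraph.mem_neighborFinset, Finset.notMem_empty, iff_false]
  exact fun hy => h (adj_mem_gsupp hy)

lemma handshake_gsupp (G : SimpleGraph V) [DecidableRel G.Adj] :
    ∑ x ∈ gsupp G, G.degree x = 2 * G.edgeFinset.card := by
  rw [← SimpleGraph.sum_degrees_eq_twice_card_edges]
  exact Finset.sum_subset (Finset.subset_univ _)
    (fun x _ hx => degree_eq_zero_of_not_mem_gsupp hx)

lemma neighborFinset_subset_gsupp {G : SimpleGraph V} [DecidableRel G.Adj] (x : V) :
    G.neighborFinset x ⊆ (gsupp G).erase x := by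
  intro y hy
  rw [SimpleGraph.mem_neighborFinset] at hy
  exact Finset.mem_erase.mpr ⟨hy.ne', adj_mem_gsupp hy.symm⟩

/-- Restriction of a graph to a set of vertices (kept on the same vertex type). -/
def restrict (G : SimpleGraph V) (S : Set V) : SimpleGraph V where
  Adj x y := G.Adj x y ∧ x ∈ S ∧ y ∈ S
  symm := ⟨fun x y => by tauto⟩
  loopless := ⟨fun x => by simp⟩

instance (G : SimpleGraph V) [DecidableRel G.Adj] (S : Set V) [DecidablePred (· ∈ S)] :
    DecidableRel (restrict G S).Adj := fun x y => by unfold restrict; simp only; infer_instance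

lemma restrict_le (G : SimpleGraph V) (S : Set V) : restrict G S ≤ G := fun x y h => h.1

lemma good_of_restrict {G : SimpleGraph V} {S : Set V} {L : List V}
    (h : Good (restrict G S) L) : Good G L :=
  ⟨h.1, h.2.1.imp (fun a b hab => hab.1), h.2.2⟩

lemma edgeFinset_restrict_compl_singleton (G : SimpleGraph V) [DecidableRel G.Adj] (v : V) :
    (restrict G {x | x ≠ v}).edgeFinset = G.edgeFinset \ G.incidenceFinset v := by
  ext e
  induction e with
  | _ a b =>
    simp only [SimpleGraph.mem_edgeFinset, SimpleGraph.mem_edgeSet, Finset.mem_sdiff,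
      SimpleGraph.mem_incidenceFinset, SimpleGraph.incidenceSet, Set.mem_setOf_eq]
    constructor
    · rintro ⟨h, ha, hb⟩
      refine ⟨h, ?_⟩
      rintro ⟨-, hv⟩
      rw [Sym2.mem_iff] at hv
      rcases hv with rfl | rfl
      · exact ha rfl
      · exact hb rfl
    · rintro ⟨h, hni⟩
      refine ⟨h, ?_, ?_⟩ <;> rintro rfl <;> exact hni ⟨h, by simp⟩

lemma card_edgeFinset_restrict_compl_singleton (G : SimpleGraph V) [DecidableRel G.Adj] (v : V) :
    (restrict G {x | x ≠ v}).edgeFinset.card + G.degree v = G.edgeFinset.card := by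
  rw [edgeFinset_restrict_compl_singleton, Finset.card_sdiff_of_subset
      (by rw [SimpleGraph.incidenceFinset_eq_filter]; exact Finset.filter_subset _ _),
    SimpleGraph.card_incidenceFinset_eq_degree]
  have h := Finset.card_le_card (show G.incidenceFinset v ⊆ G.edgeFinset by
    rw [SimpleGraph.incidenceFinset_eq_filter]; exact Finset.filter_subset _ _)
  rw [SimpleGraph.card_incidenceFinset_eq_degree] at h
  omega

lemma edgeFinset_split (G : SimpleGraph V) [DecidableRel G.Adj] (S : Set V)
    [DecidablePred (· ∈ S)] (hcl : ∀ x y, G.Adj x y → x ∈ S → y ∈ S) :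
    G.edgeFinset.card = (restrict G S).edgeFinset.card + (restrict G Sᶜ).edgeFinset.card := by
  have hdisj : Disjoint (restrict G S).edgeFinset (restrict G Sᶜ).edgeFinset := by
    rw [Finset.disjoint_left]
    intro e h1 h2
    induction e with
    | _ a b =>
      simp only [SimpleGraph.mem_edgeFinset, SimpleGraph.mem_edgeSet] at h1 h2
      exact h2.2.1 h1.2.1
  have hun : G.edgeFinset = (restrict G S).edgeFinset ∪ (restrict G Sᶜ).edgeFinset := by
    ext e
    induction e with
    | _ a b =>
      simp only [Finset.mem_union, SimpleGraph.mem_edgeFinset, SimpleGraph.mem_edgeSet]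
      constructor
      · intro h
        by_cases ha : a ∈ S
        · exact Or.inl ⟨h, ha, hcl a b h ha⟩
        · refine Or.inr ⟨h, ha, fun hb => ha (hcl b a h.symm hb)⟩
      · rintro (h | h) <;> exact h.1
  rw [hun, Finset.card_union_of_disjoint hdisj]

/-- The main combinatorial step in the connected, min-degree case:
a maximal good list shorter than `k` is impossible. -/
theorem core_main (G : SimpleGraph V) [DecidableRel G.Adj] (k : ℕ) (hk3 : 3 ≤ k)
    (hcon : ∀ x ∈ gsupp G, ∀ y ∈ gsupp G, G.Reachable x y)
    (hdeg : ∀ v ∈ gsupp G, k - 1 ≤ 2 * G.degree v)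
    (h : (k - 2) * (gsupp G).card < 2 * G.edgeFinset.card)
    (L : List V) (hL : Good G L)
    (hmax : ∀ M : List V, Good G M → M.length ≤ L.length)
    (hL2 : 2 ≤ L.length) (hlen : L.length < k) : False := by
  obtain ⟨hne, hchain', hnd⟩ := hL
  set l : ℕ := L.length - 1 with hldef
  have hlen1 : L.length = l + 1 := by omega
  have hl1 : 1 ≤ l := by omega
  set x : ℕ → V := fun n => L.getD n (L.head hne) with hx
  have hxe : ∀ {t : ℕ} (ht : t < L.length), L[t] = x t :=
    fun ht => (List.getD_eq_getElem L _ ht).symm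
  have hchain : ∀ i, i < l → G.Adj (x i) (x (i + 1)) := by
    intro i hi
    have := List.isChain_iff_getElem.mp hchain' i (by omega)
    rwa [hxe, hxe] at this
  have hinj : ∀ i j, i ≤ l → j ≤ l → x i = x j → i = j := by
    intro i j hi hj hxy
    have hinj' := List.nodup_iff_injective_get.mp hnd
    have : L.get ⟨i, by omega⟩ = L.get ⟨j, by omega⟩ := by
      rw [List.get_eq_getElem, List.get_eq_getElem, hxe, hxe, hxy]
    exact congrArg Fin.val (hinj' this)
  have hxmem : ∀ i, i ≤ l → x i ∈ L := by
    intro i hi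
    have := List.get_mem L ⟨i, by omega⟩
    rwa [List.get_eq_getElem, hxe] at this
  have hmemx : ∀ a ∈ L, ∃ i ≤ l, x i = a := by
    intro a ha
    obtain ⟨⟨n, hn⟩, hget⟩ := List.mem_iff_get.mp ha
    rw [List.get_eq_getElem, hxe] at hget
    exact ⟨n, by omega, hget⟩
  have hext : ∀ (M : List V) (hg : Good G M) (w : V), (∀ y ∈ M.head?, G.Adj w y) →
      M.length = L.length → w ∈ M := by
    intro M hg w hadj hlenM
    by_contra hw
    have hgood : Good G (w :: M) :=
      ⟨by simp, List.isChain_cons.mpr ⟨hadj, hg.2.1⟩, List.nodup_cons.mpr ⟨hw, hg.2.2⟩⟩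
    have := hmax _ hgood
    simp [hlenM] at this
  have hh0 : L.head? = some (x 0) := by
    rw [List.head?_eq_head hne, ← hxe (show 0 < L.length by omega), List.getElem_zero]
  have hNu : ∀ w, G.Adj w (x 0) → w ∈ L := by
    intro w hw
    refine hext L ⟨hne, hchain', hnd⟩ w ?_ rfl
    intro y hy
    rw [hh0] at hy
    simp only [Option.mem_some_iff] at hy
    subst hy; exact hw
  have hlastL : L.getLast? = some (x l) := by
    have h1 : L.length - 1 = l := by omega
    rw [List.getLast?_eq_getLast hne, List.getLast_eq_getElem, hxe (by omega), h1]
  have hNv : ∀ w, G.Adj w (x l) → w ∈ L := by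
    intro w hw
    have hrev : Good G L.reverse := ⟨by simp [hne], by
      rw [List.Chain', List.isChain_reverse, show (fun a b => G.Adj b a) = G.Adj from flip_adj G]; exact hchain', List.nodup_reverse.mpr hnd⟩
    have := hext L.reverse hrev w ?_ (by simp)
    · exact List.mem_reverse.mp this
    · intro y hy
      rw [List.head?_reverse, hlastL] at hy
      simp only [Option.mem_some_iff] at hy
      subst hy; exact hw
  set A := (Finset.range l).filter (fun i => G.Adj (x 0) (x (i + 1))) with hA
  set B := (Finset.range l).filter (fun i => G.Adj (x l) (x i)) with hB
  have hcardA : G.degree (x 0) ≤ A.card := by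
    rw [← SimpleGraph.card_neighborFinset_eq_degree]
    apply Finset.card_le_card_of_injOn (fun a => L.idxOf a - 1)
    · intro a ha
      rw [Finset.mem_coe, SimpleGraph.mem_neighborFinset] at ha
      have haL : a ∈ L := hNu a ha.symm
      have hia : L.idxOf a < L.length := List.idxOf_lt_length_iff.mpr haL
      have hget : x (L.idxOf a) = a := by rw [← hxe hia, List.getElem_idxOf]
      have hia0 : L.idxOf a ≠ 0 := by
        intro h0
        rw [h0] at hget
        exact G.ne_of_adj ha hget
      dsimp only
      rw [Finset.mem_coe, hA, Finset.mem_filter, Finset.mem_range]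
      constructor
      · omega
      · have heq : L.idxOf a - 1 + 1 = L.idxOf a := by omega
        rw [heq, hget]; exact ha
    · intro a ha b hb hab
      simp only [Finset.mem_coe, SimpleGraph.mem_neighborFinset] at ha hb
      have haL : a ∈ L := hNu a ha.symm
      have hbL : b ∈ L := hNu b hb.symm
      have hia : L.idxOf a < L.length := List.idxOf_lt_length_iff.mpr haL
      have hib : L.idxOf b < L.length := List.idxOf_lt_length_iff.mpr hbL
      have hgeta : x (L.idxOf a) = a := by rw [← hxe hia, List.getElem_idxOf]
      have hgetb : x (L.idxOf b) = b := by rw [← hxe hib, List.getElem_idxOf]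
      have hia0 : L.idxOf a ≠ 0 := fun h0 => G.ne_of_adj ha (by rw [h0] at hgeta; exact hgeta)
      have hib0 : L.idxOf b ≠ 0 := fun h0 => G.ne_of_adj hb (by rw [h0] at hgetb; exact hgetb)
      dsimp only at hab
      have : L.idxOf a = L.idxOf b := by omega
      rw [← hgeta, ← hgetb, this]
  have hcardB : G.degree (x l) ≤ B.card := by
    rw [← SimpleGraph.card_neighborFinset_eq_degree]
    apply Finset.card_le_card_of_injOn (fun a => L.idxOf a)
    · intro a ha
      rw [Finset.mem_coe, SimpleGraph.mem_neighborFinset] at ha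
      have haL : a ∈ L := hNv a ha.symm
      have hia : L.idxOf a < L.length := List.idxOf_lt_length_iff.mpr haL
      have hget : x (L.idxOf a) = a := by rw [← hxe hia, List.getElem_idxOf]
      have hial : L.idxOf a ≠ l := by
        intro h0
        rw [h0] at hget
        exact G.ne_of_adj ha hget
      dsimp only
      rw [Finset.mem_coe, hB, Finset.mem_filter, Finset.mem_range]
      exact ⟨by omega, by rw [hget]; exact ha⟩
    · intro a ha b hb hab
      simp only [Finset.mem_coe, SimpleGraph.mem_neighborFinset] at ha hb
      have haL : a ∈ L := hNv a ha.symm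
      have hbL : b ∈ L := hNv b hb.symm
      have hia : L.idxOf a < L.length := List.idxOf_lt_length_iff.mpr haL
      have hib : L.idxOf b < L.length := List.idxOf_lt_length_iff.mpr hbL
      have hgeta : x (L.idxOf a) = a := by rw [← hxe hia, List.getElem_idxOf]
      have hgetb : x (L.idxOf b) = b := by rw [← hxe hib, List.getElem_idxOf]
      dsimp only at hab
      rw [← hgeta, ← hgetb, hab]
  have husupp : x 0 ∈ gsupp G := adj_mem_gsupp (hchain 0 hl1)
  have hvsupp : x l ∈ gsupp G := by
    have h1 := hchain (l - 1) (by omega)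
    have h2 : l - 1 + 1 = l := by omega
    rw [h2] at h1
    exact adj_mem_gsupp h1.symm
  have houtside : ∃ w ∈ gsupp G, w ∉ L := by
    by_contra hall
    push_neg at hall
    have hsub : gsupp G ⊆ L.toFinset := fun z hz => List.mem_toFinset.mpr (hall z hz)
    have hs_le : (gsupp G).card ≤ L.length :=
      le_trans (Finset.card_le_card hsub) L.toFinset_card_le
    have hdeg_le : ∀ z ∈ gsupp G, G.degree z ≤ (gsupp G).card - 1 := by
      intro z hz
      rw [← SimpleGraph.card_neighborFinset_eq_degree]
      calc (G.neighborFinset z).card ≤ ((gsupp G).erase z).card :=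
            Finset.card_le_card (neighborFinset_subset_gsupp z)
        _ = (gsupp G).card - 1 := Finset.card_erase_of_mem hz
    have hsum : 2 * G.edgeFinset.card ≤ (gsupp G).card * ((gsupp G).card - 1) := by
      rw [← handshake_gsupp]
      calc ∑ x ∈ gsupp G, G.degree x ≤ ∑ _x ∈ gsupp G, ((gsupp G).card - 1) :=
            Finset.sum_le_sum hdeg_le
        _ = (gsupp G).card * ((gsupp G).card - 1) := by rw [Finset.sum_const, smul_eq_mul]
    have hs_k : (gsupp G).card - 1 ≤ k - 2 := by omega
    have hmul : (gsupp G).card * ((gsupp G).card - 1) ≤ (gsupp G).card * (k - 2) :=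
      Nat.mul_le_mul_left _ hs_k
    have hcomm : (gsupp G).card * (k - 2) = (k - 2) * (gsupp G).card := Nat.mul_comm _ _
    omega
  obtain ⟨w, hwsupp, hwL⟩ := houtside
  obtain ⟨p⟩ := hcon _ husupp _ hwsupp
  obtain ⟨d, hd, hd1, hd2⟩ := p.exists_boundary_dart {z | z ∈ L} (hxmem 0 (by omega)) hwL
  obtain ⟨j, hjle, hxj⟩ := hmemx d.toProd.1 hd1
  have hABcard : l + 1 ≤ A.card + B.card := by
    have h1 := hdeg _ husupp
    have h2 := hdeg _ hvsupp
    omega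
  have hABinter : (A ∩ B).Nonempty := by
    rw [← Finset.card_pos]
    have h1 := Finset.card_union_add_card_inter A B
    have h2 : (A ∪ B).card ≤ l := by
      refine le_trans (Finset.card_le_card ?_) (le_of_eq (Finset.card_range l))
      exact Finset.union_subset (Finset.filter_subset _ _) (Finset.filter_subset _ _)
    omega
  obtain ⟨i, hiAB⟩ := hABinter
  rw [Finset.mem_inter, hA, hB, Finset.mem_filter, Finset.mem_filter, Finset.mem_range] at hiAB
  obtain ⟨⟨hil, hAi⟩, -, hBi⟩ := hiAB
  obtain ⟨M, hMgood, hMlen⟩ := surgery G L (L.head hne) l i j hlen1 hchain' hnd hil hjle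
    hAi hBi d.toProd.2 hd2 (by rw [show L.getD j (L.head hne) = x j from rfl, hxj]; exact d.adj.symm)
  have := hmax M hMgood
  omega

/-- The connected-support, large-min-degree case. -/
theorem core (G : SimpleGraph V) [DecidableRel G.Adj] (k : ℕ) (hk3 : 3 ≤ k)
    (hcon : ∀ x ∈ gsupp G, ∀ y ∈ gsupp G, G.Reachable x y)
    (hdeg : ∀ v ∈ gsupp G, k - 1 ≤ 2 * G.degree v)
    (h : (k - 2) * (gsupp G).card < 2 * G.edgeFinset.card) :
    ∃ L : List V, Good G L ∧ L.length = k := by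
  have hm : G.edgeFinset.Nonempty := by
    rw [Finset.nonempty_iff_ne_empty]
    intro hemp
    rw [hemp] at h
    simp at h
  obtain ⟨e, he⟩ := hm
  obtain ⟨a, b, hab, hadj⟩ : ∃ a b, e = s(a, b) ∧ G.Adj a b := by
    induction e with
    | _ a b => exact ⟨a, b, rfl, by simpa [SimpleGraph.mem_edgeFinset] using he⟩
  have hgood2 : Good G [a, b] := ⟨by simp, by simp [List.Chain', hadj], by simp [hadj.ne]⟩
  have hbdd : ∀ M : List V, Good G M → M.length ≤ Fintype.card V := fun M hM =>
    hM.2.2.length_le_card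
  obtain ⟨L, hL, hmax⟩ : ∃ L : List V, Good G L ∧ ∀ M : List V, Good G M →
      M.length ≤ L.length := by
    classical
    set P : ℕ → Prop := fun n => ∃ L : List V, Good G L ∧ L.length = n with hP
    have h2 : P 2 := ⟨[a, b], hgood2, rfl⟩
    have hPb : ∀ n, P n → n ≤ Fintype.card V := by
      rintro n ⟨L, hL, rfl⟩; exact hbdd L hL
    obtain ⟨L, hL, hLlen⟩ := Nat.findGreatest_spec (P := P) (hPb 2 h2) h2
    exact ⟨L, hL, fun M hM => hLlen ▸ Nat.le_findGreatest (hPb _ ⟨M, hM, rfl⟩) ⟨M, hM, rfl⟩⟩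
  have hL2 : 2 ≤ L.length := hmax [a, b] hgood2
  by_cases hlen : k ≤ L.length
  · refine ⟨L.take k, ⟨?_, ?_, ?_⟩, by simp [hlen]⟩
    · intro hnil
      have := congrArg List.length hnil
      simp [hlen] at this
      omega
    · exact hL.2.1.infix ((L.take_prefix k).isInfix)
    · exact hL.2.2.sublist (L.take_sublist k)
  · exact (core_main G k hk3 hcon hdeg h L hL hmax hL2 (by omega)).elim

/-- Main induction: any graph whose edge count beats `(k-2)/2` times its support size
contains a path on `k` vertices (as a good list). -/
theorem key (k : ℕ) (hk3 : 3 ≤ k) : ∀ (N : ℕ) {V : Type*} [Fintype V] [DecidableEq V]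
    (G : SimpleGraph V) [DecidableRel G.Adj],
    G.edgeFinset.card + (gsupp G).card ≤ N →
    (k - 2) * (gsupp G).card < 2 * G.edgeFinset.card →
    ∃ L : List V, Good G L ∧ L.length = k := by
  intro N
  induction N with
  | zero =>
    intro V _ _ G _ hN h
    have : G.edgeFinset.card = 0 := by omega
    omega
  | succ N ih =>
    intro V _ _ G _ hN h
    by_cases hlow : ∃ v ∈ gsupp G, 2 * G.degree v ≤ k - 2
    · -- delete a low-degree support vertex
      obtain ⟨v, hv, hdv⟩ := hlow
      have hdpos : 0 < G.degree v := by
        obtain ⟨y, hy⟩ := mem_gsupp.mp hv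
        exact (G.degree_pos_iff_exists_adj v).mpr ⟨y, hy⟩
      have hedge : (restrict G {x | x ≠ v}).edgeFinset.card + G.degree v =
          G.edgeFinset.card := card_edgeFinset_restrict_compl_singleton G v
      have hsupp : gsupp (restrict G {x | x ≠ v}) ⊆ (gsupp G).erase v := by
        intro z hz
        obtain ⟨y, hy⟩ := mem_gsupp.mp hz
        exact Finset.mem_erase.mpr ⟨hy.2.1, adj_mem_gsupp hy.1⟩
      have hscard : (gsupp (restrict G {x | x ≠ v})).card ≤ (gsupp G).card - 1 := by
        refine le_trans (Finset.card_le_card hsupp) ?_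
        rw [Finset.card_erase_of_mem hv]
      obtain ⟨t, ht⟩ : ∃ t, (gsupp G).card = t + 1 :=
        ⟨(gsupp G).card - 1, by have := Finset.card_pos.mpr ⟨v, hv⟩; omega⟩
      have hmul1 : (k - 2) * (gsupp (restrict G {x | x ≠ v})).card ≤ (k - 2) * t :=
        Nat.mul_le_mul_left _ (by omega)
      have hmul2 : (k - 2) * (gsupp G).card = (k - 2) * t + (k - 2) := by
        rw [ht, Nat.mul_add, Nat.mul_one]
      have hh' : (k - 2) * (gsupp (restrict G {x | x ≠ v})).card <
          2 * (restrict G {x | x ≠ v}).edgeFinset.card := by omega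
      have hN' : (restrict G {x | x ≠ v}).edgeFinset.card +
          (gsupp (restrict G {x | x ≠ v})).card ≤ N := by omega
      obtain ⟨L, hLg, hLl⟩ := ih (restrict G {x | x ≠ v}) hN' hh'
      exact ⟨L, good_of_restrict hLg, hLl⟩
    · push_neg at hlow
      by_cases hcon : ∀ x ∈ gsupp G, ∀ y ∈ gsupp G, G.Reachable x y
      · exact core G k hk3 hcon (fun v hv => by have := hlow v hv; omega) h
      · -- split along a reachability class
        push_neg at hcon
        obtain ⟨x0, hx0, y0, hy0, hnr⟩ := hcon
        set S : Set V := {z | G.Reachable x0 z} with hS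
        haveI : DecidablePred (· ∈ S) := fun z => Classical.propDecidable _
        have hcl : ∀ a b, G.Adj a b → a ∈ S → b ∈ S := fun a b hab ha =>
          ha.trans hab.reachable
        have hsplit := edgeFinset_split G S hcl
        have hsub1 : gsupp (restrict G S) ⊆ gsupp G := fun z hz => by
          obtain ⟨y, hy⟩ := mem_gsupp.mp hz; exact adj_mem_gsupp hy.1
        have hsub2 : gsupp (restrict G Sᶜ) ⊆ gsupp G := fun z hz => by
          obtain ⟨y, hy⟩ := mem_gsupp.mp hz; exact adj_mem_gsupp hy.1
        have hdisj : Disjoint (gsupp (restrict G S)) (gsupp (restrict G Sᶜ)) := by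
          rw [Finset.disjoint_left]
          intro z h1 h2
          obtain ⟨y1, hy1⟩ := mem_gsupp.mp h1
          obtain ⟨y2, hy2⟩ := mem_gsupp.mp h2
          exact hy2.2.1 hy1.2.1
        have hcards : (gsupp (restrict G S)).card + (gsupp (restrict G Sᶜ)).card ≤ (gsupp G).card := by
          rw [← Finset.card_union_of_disjoint hdisj]
          exact Finset.card_le_card (Finset.union_subset hsub1 hsub2)
        have hy0n1 : y0 ∉ gsupp (restrict G S) := by
          intro hz
          obtain ⟨y, hy⟩ := mem_gsupp.mp hz
          exact hnr hy.2.1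
        have hx0n2 : x0 ∉ gsupp (restrict G Sᶜ) := by
          intro hz
          obtain ⟨y, hy⟩ := mem_gsupp.mp hz
          exact hy.2.1 (SimpleGraph.Reachable.refl x0)
        have hlt1 : (gsupp (restrict G S)).card < (gsupp G).card :=
          Finset.card_lt_card ⟨hsub1, fun hsub => hy0n1 (hsub hy0)⟩
        have hlt2 : (gsupp (restrict G Sᶜ)).card < (gsupp G).card :=
          Finset.card_lt_card ⟨hsub2, fun hsub => hx0n2 (hsub hx0)⟩
        have hmulsum : (k - 2) * (gsupp (restrict G S)).card + (k - 2) * (gsupp (restrict G Sᶜ)).card ≤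
            (k - 2) * (gsupp G).card := by
          rw [← Nat.mul_add]
          exact Nat.mul_le_mul_left _ hcards
        rcases lt_or_ge ((k - 2) * (gsupp (restrict G S)).card)
            (2 * (restrict G S).edgeFinset.card) with h1 | h1
        · obtain ⟨L, hLg, hLl⟩ := ih (restrict G S) (by omega) h1
          exact ⟨L, good_of_restrict hLg, hLl⟩
        · have h2 : (k - 2) * (gsupp (restrict G Sᶜ)).card <
              2 * (restrict G Sᶜ).edgeFinset.card := by omega
          obtain ⟨L, hLg, hLl⟩ := ih (restrict G Sᶜ) (by omega) h2
          exact ⟨L, good_of_restrict hLg, hLl⟩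

end ErdosGallaiAux

/-- Erdős–Gallai: every graph on `n` vertices with more than `(k-2)n/2` edges
contains a path on `k` vertices. -/
theorem stmt_0 {V : Type*} [Fintype V] (G : SimpleGraph V) (n k : ℕ)
    (hn : Fintype.card V = n) (hk : 2 ≤ k)
    (he : (k - 2) * n < 2 * G.edgeSet.ncard) :
    ∃ (u v : V) (p : G.Walk u v), p.IsPath ∧ p.length + 1 = k := by
  classical
  have hncard : G.edgeSet.ncard = G.edgeFinset.card := by
    rw [← SimpleGraph.coe_edgeFinset, Set.ncard_coe_finset]
  rcases eq_or_lt_of_le hk with hk2 | hk3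
  · -- k = 2 : a single edge suffices
    have hpos : 0 < G.edgeSet.ncard := by omega
    have hne : G.edgeFinset.Nonempty := by
      rw [← Finset.card_pos, ← hncard]
      exact hpos
    obtain ⟨e, heF⟩ := hne
    obtain ⟨a, b, -, hadj⟩ : ∃ a b, e = s(a, b) ∧ G.Adj a b := by
      induction e with
      | _ a b => exact ⟨a, b, rfl, by simpa [SimpleGraph.mem_edgeFinset] using heF⟩
    obtain ⟨u, v, p, hp, hl⟩ := ErdosGallaiAux.exists_path_of_good G [a, b]
      ⟨by simp, by simp [List.Chain', hadj], by simp [hadj.ne]⟩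
    exact ⟨u, v, p, hp, by rw [hl, ← hk2]; rfl⟩
  · -- k ≥ 3 : main theorem
    have hsupp_le : (ErdosGallaiAux.gsupp G).card ≤ n := by
      rw [← hn]
      exact Finset.card_le_univ _
    have hkey : (k - 2) * (ErdosGallaiAux.gsupp G).card < 2 * G.edgeFinset.card := by
      have h1 : (k - 2) * (ErdosGallaiAux.gsupp G).card ≤ (k - 2) * n := Nat.mul_le_mul_left _ hsupp_le
      omega
    obtain ⟨L, hLg, hLl⟩ := ErdosGallaiAux.key k hk3 (G.edgeFinset.card + (ErdosGallaiAux.gsupp G).card) G le_rfl hkey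
    obtain ⟨u, v, p, hp, hl⟩ := ErdosGallaiAux.exists_path_of_good G L hLg
    exact ⟨u, v, p, hp, by rw [hl, hLl]⟩
end

section
/- Every graph on n vertices with more than (k-1)(n-1)/2 edges contains a cycle of length at least k. -/
/- Proof of the Erdős–Gallai theorem on cycles.  Strategy: strong induction on the
number of vertices, with (a) deletion of low-degree vertices, (b) splitting along a
closed vertex set, (c) a Pósa-crossing argument when the longest path is short, and
(d) a rotation/pivot argument deleting the set of rotation endpoints otherwise. -/
open SimpleGraph Walk List

namespace EG
variable {V : Type*} {G : SimpleGraph V}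

def walkOfFn (f : ℕ → V) : (L : ℕ) → (∀ i, i < L → G.Adj (f i) (f (i+1))) → G.Walk (f 0) (f L)
  | 0, _ => Walk.nil
  | (L+1), h => (walkOfFn f L (fun i hi => h i (Nat.lt_succ_of_lt hi))).concat (h L (Nat.lt_succ_self L))

@[simp] lemma length_walkOfFn (f : ℕ → V) (L : ℕ) (h : ∀ i, i < L → G.Adj (f i) (f (i+1))) :
    (walkOfFn (G := G) f L h).length = L := by
  induction L with
  | zero => rfl
  | succ L ih => simp [walkOfFn, Walk.length_concat, ih]

lemma getVert_concat' {u v w : V} (p : G.Walk u v) (h : G.Adj v w) (i : ℕ) :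
    (p.concat h).getVert i = if i ≤ p.length then p.getVert i else w := by
  rw [Walk.concat_eq_append, Walk.getVert_append]
  split_ifs with h1 h2 h2
  · rfl
  · omega
  · have : i = p.length := by omega
    subst this
    simp
  · have h3 : 1 ≤ i - p.length := by omega
    rw [Walk.getVert_cons _ _ (by omega)]
    exact Walk.getVert_of_length_le _ (by simpa using h3)

lemma getVert_walkOfFn (f : ℕ → V) (L : ℕ) (h : ∀ i, i < L → G.Adj (f i) (f (i+1)))
    {i : ℕ} (hi : i ≤ L) : (walkOfFn (G := G) f L h).getVert i = f i := by
  induction L with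
  | zero => interval_cases i; simp [walkOfFn]
  | succ L ih =>
    rw [walkOfFn, getVert_concat']
    rcases Nat.lt_or_ge i (L+1) with h1 | h1
    · rw [if_pos (by simpa [length_walkOfFn] using Nat.lt_succ_iff.mp h1)]
      exact ih _ (Nat.lt_succ_iff.mp h1)
    · have : i = L + 1 := by omega
      subst this
      rw [if_neg (by simp)]

lemma support_eq_map_range {u v : V} (p : G.Walk u v) :
    p.support = (List.range (p.length + 1)).map p.getVert := by
  induction p with
  | nil => simp [Walk.support_nil, List.range_succ]
  | @cons a b c hadj q ih =>
    rw [Walk.support_cons, Walk.length_cons, List.range_succ_eq_map, List.map_cons, ih]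
    congr 1
    rw [List.map_map]
    rfl

lemma edges_eq_map_range {u v : V} (p : G.Walk u v) :
    p.edges = (List.range p.length).map (fun i => s(p.getVert i, p.getVert (i+1))) := by
  induction p with
  | nil => simp
  | @cons a b c hadj q ih =>
    rw [Walk.edges_cons, Walk.length_cons, List.range_succ_eq_map, List.map_cons, ih]
    congr 1
    · simp [Walk.getVert_zero]
    · rw [List.map_map]
      rfl

lemma isPath_iff_injOn {u v : V} (p : G.Walk u v) :
    p.IsPath ↔ Set.InjOn p.getVert {i | i ≤ p.length} := by
  rw [Walk.isPath_def, support_eq_map_range]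
  constructor
  · intro h i hi j hj hij
    simp only [Set.mem_setOf_eq] at hi hj
    exact List.inj_on_of_nodup_map h (by simp only [List.mem_range]; omega)
      (by simp only [List.mem_range]; omega) hij
  · intro h
    refine List.Nodup.map_on ?_ List.nodup_range
    intro i hi j hj hij
    simp only [List.mem_range] at hi hj
    exact h (by simp only [Set.mem_setOf_eq]; omega) (by simp only [Set.mem_setOf_eq]; omega) hij

lemma injOn_of_isPath {u v : V} {p : G.Walk u v} (hp : p.IsPath) {i j : ℕ}
    (hi : i ≤ p.length) (hj : j ≤ p.length) (hij : p.getVert i = p.getVert j) : i = j :=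
  (isPath_iff_injOn p).mp hp (by exact hi) (by exact hj) hij

lemma mem_support_iff_exists_getVert {u v w : V} {p : G.Walk u v} :
    w ∈ p.support ↔ ∃ i, i ≤ p.length ∧ p.getVert i = w := by
  rw [support_eq_map_range, List.mem_map]
  constructor
  · rintro ⟨i, hi, rfl⟩
    exact ⟨i, by simpa [Nat.lt_succ_iff] using hi, rfl⟩
  · rintro ⟨i, hi, rfl⟩
    exact ⟨i, by simp [Nat.lt_succ_iff, hi], rfl⟩

/-- A path built from an injective indexing function. -/
lemma isPath_walkOfFn (f : ℕ → V) (L : ℕ) (h : ∀ i, i < L → G.Adj (f i) (f (i+1)))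
    (hinj : ∀ i j, i ≤ L → j ≤ L → f i = f j → i = j) :
    (walkOfFn (G := G) f L h).IsPath := by
  rw [isPath_iff_injOn]
  intro i hi j hj hij
  simp only [Set.mem_setOf_eq, length_walkOfFn] at hi hj
  rw [getVert_walkOfFn f L h hi, getVert_walkOfFn f L h hj] at hij
  exact hinj i j hi hj hij

/-- A generic cycle criterion via `getVert` injectivity. -/
lemma isCycle_of_getVert {u : V} (c : G.Walk u u) (hL : 3 ≤ c.length)
    (hinj : ∀ i j, i < c.length → j < c.length → c.getVert i = c.getVert j → i = j) :
    c.IsCycle := by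
  have hcl : c.getVert c.length = c.getVert 0 := by
    rw [Walk.getVert_length, Walk.getVert_zero]
  rw [Walk.isCycle_def]
  refine ⟨⟨?_⟩, ?_, ?_⟩
  · rw [edges_eq_map_range]
    refine List.Nodup.map_on ?_ List.nodup_range
    intro i hi j hj hij
    simp only [List.mem_range] at hi hj
    rw [Sym2.eq_iff] at hij
    rcases hij with ⟨h1, h2⟩ | ⟨h1, h2⟩
    · exact hinj i j hi hj h1
    · exfalso
      rcases Nat.lt_or_ge (j+1) c.length with hj1 | hj1
      · have hij1 : i = j + 1 := hinj i (j+1) hi hj1 h1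
        rcases Nat.lt_or_ge (i+1) c.length with hi1 | hi1
        · have : i + 1 = j := hinj (i+1) j hi1 hj h2
          omega
        · have hiL : i + 1 = c.length := by omega
          rw [hiL, hcl] at h2
          have : 0 = j := hinj 0 j (by omega) hj h2
          omega
      · have hjL : j + 1 = c.length := by omega
        rw [hjL, hcl] at h1
        have hi0 : i = 0 := hinj i 0 hi (by omega) h1
        subst hi0
        have : 1 = j := hinj 1 j (by omega) hj h2
        omega
  · intro hnil
    have : c.length = 0 := by rw [hnil]; rfl
    omega
  · rw [support_eq_map_range, List.range_succ_eq_map, List.map_cons, List.tail_cons,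
      List.map_map]
    refine List.Nodup.map_on ?_ List.nodup_range
    intro i hi j hj hij
    simp only [List.mem_range] at hi hj
    have hij' : c.getVert (i+1) = c.getVert (j+1) := hij
    rcases Nat.lt_or_ge (i+1) c.length with h1 | h1
    · rcases Nat.lt_or_ge (j+1) c.length with h2 | h2
      · have := hinj _ _ h1 h2 hij'
        omega
      · have hjL : j + 1 = c.length := by omega
        rw [hjL, hcl] at hij'
        have := hinj _ _ h1 (by omega) hij'
        omega
    · have hiL : i + 1 = c.length := by omega
      rcases Nat.lt_or_ge (j+1) c.length with h2 | h2
      · rw [hiL, hcl] at hij'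
        have : 0 = j + 1 := hinj 0 (j+1) (by omega) h2 hij'
        omega
      · omega

/-- package: cycle at a given vertex from an indexing function. -/
lemma exists_cycle_of_fn (f : ℕ → V) (L : ℕ) (h : ∀ i, i < L → G.Adj (f i) (f (i+1)))
    (hL : 3 ≤ L) (hcl : f L = f 0)
    (hinj : ∀ i j, i < L → j < L → f i = f j → i = j) :
    ∃ (u : V) (c : G.Walk u u), c.IsCycle ∧ c.length = L := by
  refine ⟨f 0, (walkOfFn (G := G) f L h).copy rfl hcl, ?_, ?_⟩
  · have hlen : ((walkOfFn (G := G) f L h).copy rfl hcl).length = L := by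
      rw [Walk.length_copy, length_walkOfFn]
    refine isCycle_of_getVert _ (by omega) ?_
    intro i j hi hj hij
    rw [hlen] at hi hj
    rw [Walk.getVert_copy, Walk.getVert_copy, getVert_walkOfFn f L h (by omega),
      getVert_walkOfFn f L h (by omega)] at hij
    exact hinj i j hi hj hij
  · rw [Walk.length_copy, length_walkOfFn]

section Surgeries
variable {V : Type*} {G : SimpleGraph V}

/-- From a path-indexing function with a chord from position j back to position 0,
a cycle of length j+1. -/
lemma exists_cycle_of_chord (g : ℕ → V) (l : ℕ)
    (hadjg : ∀ i, i < l → G.Adj (g i) (g (i+1)))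
    (hinjg : ∀ i j, i ≤ l → j ≤ l → g i = g j → i = j)
    {j : ℕ} (hj2 : 2 ≤ j) (hjl : j ≤ l) (hchord : G.Adj (g 0) (g j)) :
    ∃ (u : V) (c : G.Walk u u), c.IsCycle ∧ c.length = j + 1 := by
  set f : ℕ → V := fun i => if i ≤ j then g i else g 0 with hf
  have e1 : ∀ i, i ≤ j → f i = g i := by
    intro i hi
    simp only [hf]
    rw [if_pos hi]
  have e2 : f (j+1) = g 0 := by
    simp only [hf]
    rw [if_neg (by omega)]
  refine exists_cycle_of_fn (G := G) f (j+1) ?_ (by omega) ?_ ?_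
  · intro i hi
    rcases Nat.lt_or_ge i j with h1 | h1
    · rw [e1 i (by omega), e1 (i+1) (by omega)]
      exact hadjg i (by omega)
    · have : i = j := by omega
      subst this
      rw [e1 i le_rfl, e2]
      exact hchord.symm
  · rw [e2, e1 0 (by omega)]
  · intro a b ha hb hab
    rw [e1 a (by omega), e1 b (by omega)] at hab
    exact hinjg a b (by omega) (by omega) hab

/-- Pivot surgery: given a chord from position 0 to position j, reverse the prefix.
Produces a new path-indexing function. -/
lemma pivot_fn (g : ℕ → V) (l : ℕ)
    (hadjg : ∀ i, i < l → G.Adj (g i) (g (i+1)))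
    {j : ℕ} (hj1 : 1 ≤ j) (hjl : j ≤ l) (hchord : G.Adj (g 0) (g j)) :
    ∃ f : ℕ → V, (∀ i, i < l → G.Adj (f i) (f (i+1))) ∧
      f 0 = g (j-1) ∧ (∀ i, j ≤ i → f i = g i) ∧
      (∀ i, i ≤ j - 1 → f i = g (j-1-i)) := by
  refine ⟨fun i => if i ≤ j-1 then g (j-1-i) else g i, ?_, ?_, ?_, ?_⟩
  · intro i hi
    beta_reduce
    rcases Nat.lt_or_ge (i+1) j with h1 | h1
    · beta_reduce
      rw [if_pos (by omega : i ≤ j-1), if_pos (by omega : i+1 ≤ j-1)]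
      have h2 : j - 1 - i = (j - 1 - (i+1)) + 1 := by omega
      rw [h2]
      exact (hadjg _ (by omega)).symm
    · rcases Nat.lt_or_ge i j with h2 | h2
      · rw [if_pos (by omega : i ≤ j - 1), if_neg (by omega : ¬ (i+1 ≤ j-1))]
        have h4 : j - 1 - i = 0 := by omega
        have h5 : i + 1 = j := by omega
        rw [h4, h5]
        exact hchord
      · rw [if_neg (by omega), if_neg (by omega)]
        exact hadjg i hi
  · beta_reduce
    rw [if_pos (by omega), Nat.sub_zero]
  · intro i hij
    beta_reduce
    rw [if_neg (by omega)]
  · intro i hij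
    beta_reduce
    rw [if_pos hij]

lemma exists_path_of_fn (f : ℕ → V) (L : ℕ) (h : ∀ i, i < L → G.Adj (f i) (f (i+1)))
    (hinj : ∀ i j, i ≤ L → j ≤ L → f i = f j → i = j) :
    ∃ (a b : V) (q : G.Walk a b), q.IsPath ∧ q.length = L := by
  refine ⟨f 0, f L, walkOfFn (G := G) f L h, ?_, length_walkOfFn f L h⟩
  rw [isPath_iff_injOn]
  intro i hi j hj hij
  simp only [Set.mem_setOf_eq, length_walkOfFn] at hi hj
  rw [getVert_walkOfFn f L h hi, getVert_walkOfFn f L h hj] at hij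
  exact hinj i j hi hj hij

/-- Crossing extension, case `j ≤ t`: from crossing chords and an outside vertex
attached at position `t`, a path of length `l+1`. -/
lemma cross_ext_ge (g : ℕ → V) (l : ℕ)
    (hadjg : ∀ i, i < l → G.Adj (g i) (g (i+1)))
    (hinjg : ∀ i j, i ≤ l → j ≤ l → g i = g j → i = j)
    {j t : ℕ} (hj1 : 1 ≤ j) (hjl : j ≤ l)
    (hA : G.Adj (g 0) (g j)) (hB : G.Adj (g (j-1)) (g l))
    {z : V} (hz : ∀ i, i ≤ l → g i ≠ z) (hzt : G.Adj z (g t)) (htl : t ≤ l) (hjt : j ≤ t) :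
    ∃ (a b : V) (q : G.Walk a b), q.IsPath ∧ q.length = l + 1 := by
  set φ : ℕ → ℕ := fun i =>
    if i ≤ l-t+1 then t+i-1 else if i ≤ l-t+j+1 then j+l-t+1-i else i-(l-t+2) with hφ
  have hφle : ∀ i, 1 ≤ i → i ≤ l+1 → φ i ≤ l := by
    intro i h1 h2
    simp only [hφ]
    split_ifs <;> omega
  have hφinj : ∀ a b, 1 ≤ a → a ≤ l+1 → 1 ≤ b → b ≤ l+1 → φ a = φ b → a = b := by
    intro a b ha1 ha2 hb1 hb2 hab
    simp only [hφ] at hab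
    split_ifs at hab <;> omega
  set f : ℕ → V := fun i => if i = 0 then z else g (φ i) with hf
  have hfv : ∀ i, 1 ≤ i → f i = g (φ i) := by
    intro i h1
    simp only [hf]
    rw [if_neg (by omega)]
  refine exists_path_of_fn f (l+1) ?_ ?_
  · intro i hi
    rcases Nat.eq_zero_or_pos i with rfl | hipos
    · have c1 : φ 1 = t := by simp only [hφ]; split_ifs <;> omega
      have : f 0 = z := by simp [hf]
      rw [this, hfv 1 le_rfl, c1]
      exact hzt
    · rw [hfv i hipos, hfv (i+1) (by omega)]
      rcases Nat.lt_or_ge (i+1) (l-t+2) with hc1 | hc1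
      · -- ascending in zone 2
        have c1 : φ i = t+i-1 := by simp only [hφ]; split_ifs <;> omega
        have c2 : φ (i+1) = t+i := by simp only [hφ]; split_ifs <;> omega
        rw [c1, c2]
        have e : t + i = (t + i - 1) + 1 := by omega
        rw [e]
        exact hadjg _ (by omega)
      · rcases Nat.eq_or_lt_of_le hc1 with hc2 | hc2
        · -- seam: i = l-t+1
          have c1 : φ i = l := by simp only [hφ]; split_ifs <;> omega
          have c2 : φ (i+1) = j - 1 := by simp only [hφ]; split_ifs <;> omega
          rw [c1, c2]
          exact hB.symm
        · rcases Nat.lt_or_ge (i+1) (l-t+j+2) with hc3 | hc3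
          · -- descending in zone 3
            have c1 : φ i = (j+l-t-i) + 1 := by simp only [hφ]; split_ifs <;> omega
            have c2 : φ (i+1) = j+l-t-i := by simp only [hφ]; split_ifs <;> omega
            rw [c1, c2]
            exact (hadjg _ (by omega)).symm
          · rcases Nat.eq_or_lt_of_le hc3 with hc4 | hc4
            · -- seam: the chord hA
              have c1 : φ i = 0 := by simp only [hφ]; split_ifs <;> omega
              have c2 : φ (i+1) = j := by simp only [hφ]; split_ifs <;> omega
              rw [c1, c2]
              exact hA
            · -- ascending in zone 4
              have c1 : φ i = i-(l-t+2) := by simp only [hφ]; split_ifs <;> omega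
              have c2 : φ (i+1) = (i-(l-t+2)) + 1 := by simp only [hφ]; split_ifs <;> omega
              rw [c1, c2]
              exact hadjg _ (by omega)
  · intro a b ha hb hab
    rcases Nat.eq_zero_or_pos a with rfl | ha1
    · rcases Nat.eq_zero_or_pos b with rfl | hb1
      · rfl
      · rw [hfv b hb1] at hab
        have : f 0 = z := by simp [hf]
        rw [this] at hab
        exact absurd hab.symm (hz _ (hφle b hb1 hb))
    · rcases Nat.eq_zero_or_pos b with rfl | hb1
      · rw [hfv a ha1] at hab
        have : f 0 = z := by simp [hf]
        rw [this] at hab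
        exact absurd hab (hz _ (hφle a ha1 ha))
      · rw [hfv a ha1, hfv b hb1] at hab
        exact hφinj a b ha1 ha hb1 hb (hinjg _ _ (hφle a ha1 ha) (hφle b hb1 hb) hab)

/-- Crossing extension, case `t < j`. -/
lemma cross_ext_lt (g : ℕ → V) (l : ℕ)
    (hadjg : ∀ i, i < l → G.Adj (g i) (g (i+1)))
    (hinjg : ∀ i j, i ≤ l → j ≤ l → g i = g j → i = j)
    {j t : ℕ} (hj1 : 1 ≤ j) (hjl : j ≤ l)
    (hA : G.Adj (g 0) (g j)) (hB : G.Adj (g (j-1)) (g l))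
    {z : V} (hz : ∀ i, i ≤ l → g i ≠ z) (hzt : G.Adj z (g t)) (htl : t ≤ l) (hjt : t < j) :
    ∃ (a b : V) (q : G.Walk a b), q.IsPath ∧ q.length = l + 1 := by
  set φ : ℕ → ℕ := fun i =>
    if i ≤ t+1 then t+1-i else if i ≤ t+2+l-j then j+i-t-2 else t+l+2-i with hφ
  have hφle : ∀ i, 1 ≤ i → i ≤ l+1 → φ i ≤ l := by
    intro i h1 h2
    simp only [hφ]
    split_ifs <;> omega
  have hφinj : ∀ a b, 1 ≤ a → a ≤ l+1 → 1 ≤ b → b ≤ l+1 → φ a = φ b → a = b := by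
    intro a b ha1 ha2 hb1 hb2 hab
    simp only [hφ] at hab
    split_ifs at hab <;> omega
  set f : ℕ → V := fun i => if i = 0 then z else g (φ i) with hf
  have hfv : ∀ i, 1 ≤ i → f i = g (φ i) := by
    intro i h1
    simp only [hf]
    rw [if_neg (by omega)]
  refine exists_path_of_fn f (l+1) ?_ ?_
  · intro i hi
    rcases Nat.eq_zero_or_pos i with rfl | hipos
    · have c1 : φ 1 = t := by simp only [hφ]; split_ifs <;> omega
      have : f 0 = z := by simp [hf]
      rw [this, hfv 1 le_rfl, c1]
      exact hzt
    · rw [hfv i hipos, hfv (i+1) (by omega)]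
      rcases Nat.lt_or_ge (i+1) (t+2) with hc1 | hc1
      · -- descending in zone 2
        have c1 : φ i = (t-i) + 1 := by simp only [hφ]; split_ifs <;> omega
        have c2 : φ (i+1) = t-i := by simp only [hφ]; split_ifs <;> omega
        rw [c1, c2]
        exact (hadjg _ (by omega)).symm
      · rcases Nat.eq_or_lt_of_le hc1 with hc2 | hc2
        · -- seam: i = t+1, the chord hA
          have c1 : φ i = 0 := by simp only [hφ]; split_ifs <;> omega
          have c2 : φ (i+1) = j := by simp only [hφ]; split_ifs <;> omega
          rw [c1, c2]
          exact hA
        · rcases Nat.lt_or_ge (i+1) (t+3+l-j) with hc3 | hc3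
          · -- ascending in zone 3
            have c1 : φ i = j+i-t-2 := by simp only [hφ]; split_ifs <;> omega
            have c2 : φ (i+1) = (j+i-t-2) + 1 := by simp only [hφ]; split_ifs <;> omega
            rw [c1, c2]
            exact hadjg _ (by omega)
          · rcases Nat.eq_or_lt_of_le hc3 with hc4 | hc4
            · -- seam: hB
              have c1 : φ i = l := by simp only [hφ]; split_ifs <;> omega
              have c2 : φ (i+1) = j - 1 := by simp only [hφ]; split_ifs <;> omega
              rw [c1, c2]
              exact hB.symm
            · -- descending in zone 4
              have c1 : φ i = (t+l+1-i) + 1 := by simp only [hφ]; split_ifs <;> omega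
              have c2 : φ (i+1) = t+l+1-i := by simp only [hφ]; split_ifs <;> omega
              rw [c1, c2]
              exact (hadjg _ (by omega)).symm
  · intro a b ha hb hab
    rcases Nat.eq_zero_or_pos a with rfl | ha1
    · rcases Nat.eq_zero_or_pos b with rfl | hb1
      · rfl
      · rw [hfv b hb1] at hab
        have : f 0 = z := by simp [hf]
        rw [this] at hab
        exact absurd hab.symm (hz _ (hφle b hb1 hb))
    · rcases Nat.eq_zero_or_pos b with rfl | hb1
      · rw [hfv a ha1] at hab
        have : f 0 = z := by simp [hf]
        rw [this] at hab
        exact absurd hab (hz _ (hφle a ha1 ha))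
      · rw [hfv a ha1, hfv b hb1] at hab
        exact hφinj a b ha1 ha hb1 hb (hinjg _ _ (hφle a ha1 ha) (hφle b hb1 hb) hab)

end Surgeries

section Counting
open Finset
variable {V : Type*} [Fintype V] [DecidableEq V] (G : SimpleGraph V) [DecidableRel G.Adj]

/-- Instance-light degree. -/
def ndeg (v : V) : ℕ := (Finset.univ.filter (G.Adj v)).card

lemma ndeg_eq_degree (v : V) : ndeg G v = G.degree v := by
  classical
  rw [SimpleGraph.degree, SimpleGraph.neighborFinset_eq_filter]
  congr 1

lemma sum_ndeg_eq_twice_ncard : ∑ v, ndeg G v = 2 * G.edgeSet.ncard := by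
  classical
  have h1 : G.edgeSet.ncard = G.edgeFinset.card := by
    rw [← SimpleGraph.coe_edgeFinset, Set.ncard_coe_finset]
  rw [h1, ← SimpleGraph.sum_degrees_eq_twice_card_edges]
  exact Finset.sum_congr rfl (fun v _ => ndeg_eq_degree G v)

lemma ndeg_le_card_sub_one (v : V) : ndeg G v ≤ Fintype.card V - 1 := by
  classical
  rw [ndeg_eq_degree]
  have := G.degree_lt_card_verts v
  omega

lemma sum_ndeg_induce (W : Finset V) :
    2 * (G.induce (W : Set V)).edgeSet.ncard = ∑ u ∈ W, (W.filter (G.Adj u)).card := by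
  classical
  rw [← sum_ndeg_eq_twice_ncard]
  rw [← Finset.sum_coe_sort W (fun u => (W.filter (G.Adj u)).card)]
  apply Finset.sum_congr rfl
  intro u _
  unfold ndeg
  apply Finset.card_bij (fun (w : ↥(W : Set V)) _ => (w : V))
  · intro a ha
    simp only [Finset.mem_filter, Finset.mem_univ, true_and] at ha ⊢
    exact ⟨a.2, ha⟩
  · intro a _ b _ hab
    exact Subtype.ext hab
  · intro b hb
    simp only [Finset.mem_filter] at hb
    exact ⟨⟨b, hb.1⟩, by simp only [Finset.mem_filter, Finset.mem_univ, true_and]; exact hb.2, rfl⟩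

lemma card_coe_set (W : Finset V) : Fintype.card ↥(W : Set V) = W.card := by
  classical
  simp

lemma sum_card_filter_comm (A B : Finset V) :
    ∑ u ∈ A, (B.filter (G.Adj u)).card = ∑ b ∈ B, (A.filter (fun u => G.Adj u b)).card := by
  classical
  have h : ∀ (u : V) (C : Finset V), (C.filter (G.Adj u)).card = ∑ c ∈ C, if G.Adj u c then 1 else 0 := by
    intro u C
    rw [Finset.card_filter]
  calc ∑ u ∈ A, (B.filter (G.Adj u)).card
      = ∑ u ∈ A, ∑ b ∈ B, if G.Adj u b then 1 else 0 := Finset.sum_congr rfl (fun u _ => h u B)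
    _ = ∑ b ∈ B, ∑ u ∈ A, if G.Adj u b then 1 else 0 := Finset.sum_comm
    _ = ∑ b ∈ B, (A.filter (fun u => G.Adj u b)).card := by
        refine Finset.sum_congr rfl (fun b _ => ?_)
        rw [Finset.card_filter]

lemma ndeg_split (S : Finset V) (u : V) :
    ndeg G u = (S.filter (G.Adj u)).card + (Sᶜ.filter (G.Adj u)).card := by
  unfold ndeg
  have h1 : (Finset.univ.filter (G.Adj u)) = (S.filter (G.Adj u)) ∪ (Sᶜ.filter (G.Adj u)) := by
    rw [← Finset.filter_union, Finset.union_compl]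
  rw [h1, Finset.card_union_of_disjoint]
  exact Finset.disjoint_filter_filter disjoint_compl_right

/-- Key deletion inequality. -/
lemma deletion_chain (S : Finset V) (m : ℕ)
    (hcost : ∀ s ∈ S, 2 * ndeg G s ≤ m + (S.filter (G.Adj s)).card) :
    ∑ v, ndeg G v ≤ (∑ u ∈ Sᶜ, ((Sᶜ).filter (G.Adj u)).card) + m * S.card := by
  classical
  set X := ∑ u ∈ Sᶜ, ((Sᶜ).filter (G.Adj u)).card with hX
  set D := ∑ s ∈ S, (S.filter (G.Adj s)).card with hD
  set E := ∑ s ∈ S, ndeg G s with hE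
  have hsplit : ∑ v, ndeg G v = E + ∑ u ∈ Sᶜ, ndeg G u := by
    rw [hE, Finset.sum_add_sum_compl]
  have hC : ∑ u ∈ Sᶜ, ndeg G u = (∑ u ∈ Sᶜ, (S.filter (G.Adj u)).card) + X := by
    rw [hX, ← Finset.sum_add_distrib]
    exact Finset.sum_congr rfl (fun u _ => ndeg_split G S u)
  have hcross : ∑ u ∈ Sᶜ, (S.filter (G.Adj u)).card
      = ∑ s ∈ S, ((Sᶜ).filter (fun u => G.Adj u s)).card := sum_card_filter_comm G Sᶜ S
  have hsym : ∀ s, ((Sᶜ).filter (fun u => G.Adj u s)).card = ((Sᶜ).filter (G.Adj s)).card := by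
    intro s
    congr 1
    apply Finset.filter_congr
    intro x _
    simp [G.adj_comm]
  have hCD : (∑ u ∈ Sᶜ, (S.filter (G.Adj u)).card) + D = E := by
    rw [hcross, hD, hE, ← Finset.sum_add_distrib]
    refine Finset.sum_congr rfl (fun s _ => ?_)
    rw [hsym s, Nat.add_comm]
    exact (ndeg_split G S s).symm
  have hsum2 : 2 * E ≤ m * S.card + D := by
    calc 2 * E = ∑ s ∈ S, 2 * ndeg G s := by rw [hE, Finset.mul_sum]
      _ ≤ ∑ s ∈ S, (m + (S.filter (G.Adj s)).card) := Finset.sum_le_sum hcost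
      _ = m * S.card + D := by
          rw [Finset.sum_add_distrib, Finset.sum_const, smul_eq_mul, mul_comm, hD]
  omega

end Counting

section Master
open Finset

universe u

theorem EGaux : ∀ (N : ℕ) {V : Type u} [Fintype V] (G : SimpleGraph V) (k : ℕ),
    3 ≤ k → Fintype.card V ≤ N →
    (k - 1) * (Fintype.card V - 1) < 2 * G.edgeSet.ncard →
    ∃ (u : V) (c : G.Walk u u), c.IsCycle ∧ k ≤ c.length := by
  intro N
  induction N with
  | zero =>
    intro V _ G k hk hN he
    exfalso
    have h0 : G.edgeSet.ncard = 0 := by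
      classical
      have hVe : IsEmpty V := Fintype.card_eq_zero_iff.mp (by omega)
      have hempty : G.edgeSet = ∅ := by
        ext e
        induction e with
        | _ a b =>
          simp only [Set.mem_empty_iff_false, iff_false]
          intro _
          exact hVe.false a
      simp [hempty]
    omega
  | succ N IH =>
    intro V _ G k hk hN he
    classical
    set n := Fintype.card V with hn
    have hT : (k - 1) * (n - 1) < ∑ v, ndeg G v := by
      rw [sum_ndeg_eq_twice_ncard]; exact he
    have hTub : ∑ v, ndeg G v ≤ n * (n - 1) := by
      calc ∑ v, ndeg G v ≤ ∑ _v : V, (n - 1) :=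
            Finset.sum_le_sum (fun v _ => ndeg_le_card_sub_one G v)
        _ = n * (n - 1) := by rw [Finset.sum_const, smul_eq_mul, Finset.card_univ]
    have hn2 : 2 ≤ n := by
      by_contra hc
      have : n - 1 = 0 := by omega
      rw [this] at hT hTub
      omega
    have hkn : k ≤ n := by
      have h1 : (k-1) * (n-1) < n * (n-1) := lt_of_lt_of_le hT hTub
      have h2 : k - 1 < n := by
        by_contra hc
        push_neg at hc
        exact absurd (Nat.mul_le_mul_right (n-1) hc) (by omega)
      omega
    have hVne : Nonempty V := Fintype.card_pos_iff.mp (by omega)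
    -- the deletion step
    have step : ∀ S : Finset V, S.Nonempty → S ≠ Finset.univ →
        (∀ s ∈ S, 2 * ndeg G s ≤ (k-1) + (S.filter (G.Adj s)).card) →
        ∃ (u : V) (c : G.Walk u u), c.IsCycle ∧ k ≤ c.length := by
      intro S hSne hSuniv hcost
      have hchain := deletion_chain G S (k-1) hcost
      have hWcard : Sᶜ.card = n - S.card := by
        rw [Finset.card_compl, hn]
      have hSlt : S.card < n := by
        have := Finset.card_lt_card (Finset.ssubset_univ_iff.mpr hSuniv)
        rw [Finset.card_univ] at this
        exact this
      have hSpos : 1 ≤ S.card := Finset.card_pos.mpr hSne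
      have hW : (k-1) * (Fintype.card ↥((Sᶜ : Finset V) : Set V) - 1)
          < 2 * (G.induce ((Sᶜ : Finset V) : Set V)).edgeSet.ncard := by
        rw [card_coe_set, sum_ndeg_induce]
        have e1 : (k-1) * (n-1) = (k-1) * (Sᶜ.card - 1) + (k-1) * S.card := by
          rw [← Nat.mul_add]
          congr 1
          omega
        omega
      have hcard : Fintype.card ↥((Sᶜ : Finset V) : Set V) ≤ N := by
        rw [card_coe_set]
        omega
      obtain ⟨u, c, hc, hlen⟩ := IH (G.induce ((Sᶜ : Finset V) : Set V)) k hk hcard hW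
      refine ⟨↑u, c.map (SimpleGraph.Embedding.induce (G := G) ((Sᶜ : Finset V) : Set V)).toHom, ?_, ?_⟩
      · exact (Walk.map_isCycle_iff_of_injective
          (f := (SimpleGraph.Embedding.induce (G := G) ((Sᶜ : Finset V) : Set V)).toHom)
          (SimpleGraph.Embedding.induce (G := G) ((Sᶜ : Finset V) : Set V)).injective).mpr hc
      · exact le_of_le_of_eq hlen (Walk.length_map _ _).symm
    -- Case A : a vertex of low degree
    by_cases hA : ∃ v, 2 * ndeg G v + 1 ≤ k
    · obtain ⟨v, hv⟩ := hA
      refine step {v} ⟨v, Finset.mem_singleton_self v⟩ ?_ ?_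
      · intro hc
        have : ({v} : Finset V).card = n := by rw [hc, Finset.card_univ]
        simp at this
        omega
      · intro s hs
        rw [Finset.mem_singleton] at hs
        subst hs
        have : ({s} : Finset V).filter (G.Adj s) = ∅ := by
          ext x
          simp only [Finset.mem_filter, Finset.mem_singleton, Finset.notMem_empty, iff_false,
            not_and]
          rintro rfl
          exact fun h => G.irrefl h
        rw [this]
        simp
        omega
    push_neg at hA
    have hdeg : ∀ v, k ≤ 2 * ndeg G v := fun v => by have := hA v; omega
    -- Case B1 : a closed proper nonempty set (disconnectedness)
    by_cases hB1 : ∃ W : Finset V, W.Nonempty ∧ W ≠ Finset.univ ∧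
        ∀ u ∈ W, ∀ w, G.Adj u w → w ∈ W
    · obtain ⟨W, hWne, hWuniv, hWcl⟩ := hB1
      -- complementary closedness
      have hWccl : ∀ u ∈ Wᶜ, ∀ w, G.Adj u w → w ∈ Wᶜ := by
        intro u hu w hw
        rw [Finset.mem_compl] at hu ⊢
        intro hwW
        exact hu (hWcl w hwW u hw.symm)
      have hdegW : ∀ u ∈ W, ndeg G u = (W.filter (G.Adj u)).card := by
        intro u hu
        rw [ndeg_split G W u]
        have : Wᶜ.filter (G.Adj u) = ∅ := by
          ext x
          simp only [Finset.mem_filter, Finset.mem_compl, Finset.notMem_empty, iff_false, not_and]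
          intro hx hadj
          exact hx (hWcl u hu x hadj)
        rw [this]
        simp
      have hdegWc : ∀ u ∈ Wᶜ, ndeg G u = (Wᶜ.filter (G.Adj u)).card := by
        intro u hu
        rw [ndeg_split G Wᶜ u, compl_compl]
        have : W.filter (G.Adj u) = ∅ := by
          ext x
          simp only [Finset.mem_filter, Finset.notMem_empty, iff_false, not_and]
          intro hx hadj
          have := hWccl u hu x hadj
          rw [Finset.mem_compl] at this
          exact absurd hx this
        rw [this]
        simp
      have hsplitT : ∑ v, ndeg G v =
          (∑ u ∈ W, (W.filter (G.Adj u)).card) + ∑ u ∈ Wᶜ, (Wᶜ.filter (G.Adj u)).card := by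
        rw [← Finset.sum_add_sum_compl W (ndeg G)]
        congr 1
        · exact Finset.sum_congr rfl hdegW
        · exact Finset.sum_congr rfl hdegWc
      have hWcne : Wᶜ.Nonempty := by
        rw [← Finset.card_pos, Finset.card_compl]
        have := Finset.card_lt_card (Finset.ssubset_univ_iff.mpr hWuniv)
        rw [Finset.card_univ] at this
        omega
      have hcards : W.card + Wᶜ.card = n := by
        rw [Finset.card_compl, hn]
        have : W.card ≤ Fintype.card V := Finset.card_le_univ W
        omega
      have hWpos : 1 ≤ W.card := Finset.card_pos.mpr hWne
      have hWcpos : 1 ≤ Wᶜ.card := Finset.card_pos.mpr hWcne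
      -- one of the two sides has an excess of edges
      have hone : ((k-1) * (W.card - 1) < ∑ u ∈ W, (W.filter (G.Adj u)).card) ∨
          ((k-1) * (Wᶜ.card - 1) < ∑ u ∈ Wᶜ, (Wᶜ.filter (G.Adj u)).card) := by
        by_contra hc
        push_neg at hc
        have e1 : (k-1) * (W.card - 1) + (k-1) * (Wᶜ.card - 1) ≤ (k-1) * (n-1) := by
          rw [← Nat.mul_add]
          apply Nat.mul_le_mul_left
          omega
        omega
      -- recurse on the good side
      have recurse : ∀ U : Finset V, U.Nonempty → U ≠ Finset.univ →
          ((k-1) * (U.card - 1) < ∑ u ∈ U, (U.filter (G.Adj u)).card) →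
          ∃ (u : V) (c : G.Walk u u), c.IsCycle ∧ k ≤ c.length := by
        intro U hUne hUuniv hUe
        have hUe' : (k-1) * (Fintype.card ↥((U : Finset V) : Set V) - 1)
            < 2 * (G.induce ((U : Finset V) : Set V)).edgeSet.ncard := by
          rw [card_coe_set, sum_ndeg_induce]
          exact hUe
        have hUcard : Fintype.card ↥((U : Finset V) : Set V) ≤ N := by
          rw [card_coe_set]
          have := Finset.card_lt_card (Finset.ssubset_univ_iff.mpr hUuniv)
          rw [Finset.card_univ] at this
          omega
        obtain ⟨u, c, hc, hlen⟩ := IH (G.induce ((U : Finset V) : Set V)) k hk hUcard hUe'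
        refine ⟨↑u, c.map (SimpleGraph.Embedding.induce (G := G) ((U : Finset V) : Set V)).toHom, ?_, ?_⟩
        · exact (Walk.map_isCycle_iff_of_injective
            (f := (SimpleGraph.Embedding.induce (G := G) ((U : Finset V) : Set V)).toHom)
            (SimpleGraph.Embedding.induce (G := G) ((U : Finset V) : Set V)).injective).mpr hc
        · exact le_of_le_of_eq hlen (Walk.length_map _ _).symm
      rcases hone with h | h
      · exact recurse W hWne hWuniv h
      · refine recurse Wᶜ hWcne ?_ h
        intro hc
        have := hWne
        obtain ⟨w, hw⟩ := this
        have : w ∈ Wᶜ := hc ▸ Finset.mem_univ w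
        rw [Finset.mem_compl] at this
        exact this hw
    -- Case B2 : minimum degree ≥ k/2 and "connected enough"
    push_neg at hB1
    have hbound : ∀ W : Finset V, W.Nonempty → W ≠ Finset.univ →
        ∃ u ∈ W, ∃ w, G.Adj u w ∧ w ∉ W := by
      intro W h1 h2
      have := hB1 W h1 h2
      obtain ⟨u, hu, w, hadj, hw⟩ := this
      exact ⟨u, hu, w, hadj, hw⟩
    -- longest path setup
    set P : ℕ → Prop := fun q => ∃ (a b : V) (w : G.Walk a b), w.IsPath ∧ w.length = q with hPdef
    have hP0 : P 0 := by
      obtain ⟨v⟩ := hVne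
      exact ⟨v, v, Walk.nil, Walk.IsPath.nil, rfl⟩
    have hPbd : ∀ q, P q → q ≤ n := by
      rintro q ⟨a, b, w, hw, hwl⟩
      have := hw.length_lt
      omega
    set l := Nat.findGreatest P n with hldef
    obtain ⟨hln, hPl', hgr⟩ := Nat.findGreatest_eq_iff.mp (hldef.symm)
    have hPl : P l := by
      rcases Nat.eq_zero_or_pos l with h0 | h0
      · rw [h0]; exact hP0
      · exact hPl' (by omega)
    have hmax : ∀ (a b : V) (w : G.Walk a b), w.IsPath → w.length ≤ l := by
      intro a b w hw
      by_contra hc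
      push_neg at hc
      exact hgr hc (hPbd _ ⟨a, b, w, hw, rfl⟩) ⟨a, b, w, hw, rfl⟩
    obtain ⟨x0, xl, p, hp, hplen⟩ := hPl
    set g := p.getVert with hgdef
    have hadjg : ∀ i, i < l → G.Adj (g i) (g (i+1)) := by
      intro i hi
      exact p.adj_getVert_succ (by omega)
    have hinjg : ∀ i j, i ≤ l → j ≤ l → g i = g j → i = j := by
      intro i j hi hj hij
      exact injOn_of_isPath hp (by omega) (by omega) hij
    have hg0 : g 0 = x0 := p.getVert_zero
    have hgl : g l = xl := by rw [hgdef, ← hplen]; exact p.getVert_length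
    -- all neighbours of an endpoint of a longest path are on it
    have hext : ∀ (a b : V) (q : G.Walk a b) (w : V), q.IsPath → q.length = l → G.Adj w a →
        w ∈ q.support := by
      intro a b q w hq hql hadj
      by_contra hw
      have h1 : (Walk.cons hadj q).IsPath := (Walk.cons_isPath_iff hadj q).mpr ⟨hq, hw⟩
      have h2 := hmax _ _ _ h1
      rw [Walk.length_cons, hql] at h2
      omega
    have hnbr0 : ∀ w, G.Adj x0 w → ∃ i, 1 ≤ i ∧ i ≤ l ∧ g i = w := by
      intro w hadj
      have hmem := hext x0 xl p w hp hplen hadj.symm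
      rw [mem_support_iff_exists_getVert] at hmem
      obtain ⟨i, hi, hgi⟩ := hmem
      rw [← hgdef] at hgi
      refine ⟨i, ?_, by omega, hgi⟩
      rcases Nat.eq_zero_or_pos i with h0 | h0
      · exfalso
        rw [h0, hg0] at hgi
        exact hadj.ne hgi
      · omega
    have hnbrl : ∀ w, G.Adj xl w → ∃ i, i < l ∧ g i = w := by
      intro w hadj
      have hmem := hext xl x0 p.reverse w hp.reverse (by rw [Walk.length_reverse]; exact hplen)
        hadj.symm
      rw [Walk.support_reverse, List.mem_reverse] at hmem
      rw [mem_support_iff_exists_getVert] at hmem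
      obtain ⟨i, hi, hgi⟩ := hmem
      rw [← hgdef] at hgi
      refine ⟨i, ?_, hgi⟩
      rcases Nat.lt_or_ge i l with h0 | h0
      · exact h0
      · exfalso
        have : i = l := by omega
        rw [this, hgl] at hgi
        exact hadj.ne hgi
    set Apos := (Finset.Icc 1 l).filter (fun j => G.Adj x0 (g j)) with hAposdef
    set Bpos := (Finset.Icc 1 l).filter (fun j => G.Adj (g (j-1)) xl) with hBposdef
    have hAcard : ndeg G x0 ≤ Apos.card := by
      apply Finset.card_le_card_of_surjOn (fun j => g j)
      intro w hw
      simp only [Finset.coe_filter, Finset.mem_univ, true_and, Set.mem_setOf_eq] at hw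
      obtain ⟨i, h1, h2, h3⟩ := hnbr0 w hw
      refine ⟨i, ?_, h3⟩
      rw [hAposdef]
      simp only [Finset.coe_filter, Set.mem_setOf_eq, Finset.mem_Icc]
      exact ⟨⟨h1, h2⟩, by rw [h3]; exact hw⟩
    have hBcard : ndeg G xl ≤ Bpos.card := by
      apply Finset.card_le_card_of_surjOn (fun j => g (j-1))
      intro w hw
      simp only [Finset.coe_filter, Finset.mem_univ, true_and, Set.mem_setOf_eq] at hw
      obtain ⟨i, h1, h3⟩ := hnbrl w hw
      refine ⟨i+1, ?_, by simpa using h3⟩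
      rw [hBposdef]
      simp only [Finset.coe_filter, Set.mem_setOf_eq, Finset.mem_Icc]
      refine ⟨⟨by omega, by omega⟩, ?_⟩
      have : i + 1 - 1 = i := by omega
      rw [this, h3]
      exact hw.symm
    rcases le_or_gt l (k-2) with hl2 | hl2
    · -- short longest path : crossing argument, graph is spanned, contradiction with k ≤ n
      exfalso
      have hAB : (Apos ∩ Bpos).Nonempty := by
        have h1 : (Apos ∪ Bpos).card ≤ l := by
          calc (Apos ∪ Bpos).card ≤ (Finset.Icc 1 l).card := by
                apply Finset.card_le_card
                intro x hx
                rw [Finset.mem_union] at hx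
                rcases hx with h | h
                · exact Finset.mem_of_mem_filter x h
                · exact Finset.mem_of_mem_filter x h
            _ = l := by rw [Nat.card_Icc]; omega
        have h2 := Finset.card_inter_add_card_union Apos Bpos
        have h3 := hdeg x0
        have h4 := hdeg xl
        rw [← Finset.card_pos]
        omega
      obtain ⟨j, hj⟩ := hAB
      rw [Finset.mem_inter, hAposdef, hBposdef, Finset.mem_filter, Finset.mem_filter,
        Finset.mem_Icc] at hj
      obtain ⟨⟨⟨hj1, hjl⟩, hAdj⟩, ⟨-, hBdj⟩⟩ := hj
      by_cases hall : ∀ w : V, w ∈ p.support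
      · have hcard : n ≤ l + 1 := by
          have h1 : (Finset.univ : Finset V) ⊆ p.support.toFinset := fun w _ =>
            List.mem_toFinset.mpr (hall w)
          have h2 := Finset.card_le_card h1
          rw [Finset.card_univ] at h2
          have h3 : p.support.toFinset.card ≤ p.support.length := p.support.toFinset_card_le
          have h4 : p.support.length = l + 1 := by rw [Walk.length_support]; omega
          omega
        omega
      · push_neg at hall
        obtain ⟨z0, hz0⟩ := hall
        obtain ⟨u, hu, z, hadjz, hz⟩ := hbound p.support.toFinset
          ⟨x0, List.mem_toFinset.mpr p.start_mem_support⟩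
          (by
            intro hc
            exact hz0 (List.mem_toFinset.mp (hc ▸ Finset.mem_univ z0)))
        rw [List.mem_toFinset, mem_support_iff_exists_getVert] at hu
        obtain ⟨t, htl, hgt⟩ := hu
        rw [← hgdef] at hgt
        have htl' : t ≤ l := by omega
        have hznot : ∀ i, i ≤ l → g i ≠ z := by
          intro i hi hgi
          exact hz (List.mem_toFinset.mpr
            ((mem_support_iff_exists_getVert).mpr ⟨i, by omega, hgi⟩))
        have hzt : G.Adj z (g t) := by rw [hgt]; exact hadjz.symm
        have hBdj' : G.Adj (g (j-1)) (g l) := by rw [hgl]; exact hBdj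
        have hAdj' : G.Adj (g 0) (g j) := by rw [hg0]; exact hAdj
        rcases le_or_gt j t with hjt | hjt
        · obtain ⟨a, b, q, hq, hql⟩ :=
            cross_ext_ge g l hadjg hinjg hj1 hjl hAdj' hBdj' hznot hzt htl' hjt
          have := hmax a b q hq
          omega
        · obtain ⟨a, b, q, hq, hql⟩ :=
            cross_ext_lt g l hadjg hinjg hj1 hjl hAdj' hBdj' hznot hzt htl' hjt
          have := hmax a b q hq
          omega
    · -- long longest path : rotation argument
      by_contra hcyc
      have hlk : k - 1 ≤ l := by omega
      set SS : Finset V := Finset.univ.filter (fun s => ∃ Q : G.Walk s xl,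
        Q.IsPath ∧ Q.length = l ∧ ∀ i, k-1 ≤ i → Q.getVert i = g i) with hSSdef
      have hx0S : x0 ∈ SS := by
        rw [hSSdef, Finset.mem_filter]
        exact ⟨Finset.mem_univ _, p, hp, hplen, fun i _ => rfl⟩
      have hk1S : g (k-1) ∉ SS := by
        rw [hSSdef, Finset.mem_filter]
        rintro ⟨-, Q, hQ, hQl, hQt⟩
        have h1 : Q.getVert (k-1) = g (k-1) := hQt (k-1) le_rfl
        have h2 : Q.getVert 0 = g (k-1) := Q.getVert_zero
        have h3 : (0 : ℕ) = k - 1 :=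
          injOn_of_isPath hQ (by omega) (by omega) (h2.trans h1.symm)
        omega
      have hcost : ∀ s ∈ SS, 2 * ndeg G s ≤ (k-1) + (SS.filter (G.Adj s)).card := by
        intro s hs
        rw [hSSdef, Finset.mem_filter] at hs
        obtain ⟨-, Q, hQ, hQl, hQt⟩ := hs
        set q := Q.getVert with hqdef
        have hadjq : ∀ i, i < l → G.Adj (q i) (q (i+1)) := fun i hi =>
          Q.adj_getVert_succ (by omega)
        have hinjq : ∀ i j, i ≤ l → j ≤ l → q i = q j → i = j := fun i j hi hj hij =>
          injOn_of_isPath hQ (by omega) (by omega) hij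
        have hq0 : q 0 = s := Q.getVert_zero
        have hqlxl : q l = xl := by rw [hqdef, ← hQl]; exact Q.getVert_length
        have hconf : ∀ w, G.Adj s w → ∃ i, 1 ≤ i ∧ i ≤ k-2 ∧ q i = w := by
          intro w hadj
          have hmem := hext s xl Q w hQ hQl hadj.symm
          rw [mem_support_iff_exists_getVert] at hmem
          obtain ⟨i, hil, hqi⟩ := hmem
          rw [← hqdef] at hqi
          have hi1 : 1 ≤ i := by
            rcases Nat.eq_zero_or_pos i with h0 | h0
            · exfalso
              rw [h0, hq0] at hqi
              exact hadj.ne hqi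
            · omega
          refine ⟨i, hi1, ?_, hqi⟩
          by_contra hcc
          push_neg at hcc
          have hchord : G.Adj (q 0) (q i) := by rw [hq0, hqi]; exact hadj
          obtain ⟨u, c, hc', hcl⟩ := exists_cycle_of_chord q l hadjq hinjq
            (by omega) (by omega) hchord
          exact hcyc ⟨u, c, hc', by omega⟩
        set J := (Finset.Icc 1 (k-2)).filter (fun jj => G.Adj s (q jj)) with hJdef
        have hdegJ : ndeg G s ≤ J.card := by
          apply Finset.card_le_card_of_surjOn (fun jj => q jj)
          intro w hw
          simp only [Finset.coe_filter, Finset.mem_univ, true_and, Set.mem_setOf_eq] at hw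
          obtain ⟨i, h1, h2, h3⟩ := hconf w hw
          refine ⟨i, ?_, h3⟩
          rw [hJdef]
          simp only [Finset.coe_filter, Set.mem_setOf_eq, Finset.mem_Icc]
          exact ⟨⟨h1, h2⟩, by rw [h3]; exact hw⟩
        set J' := J.image (· - 1) with hJ'def
        have hJmem : ∀ x ∈ J, 1 ≤ x ∧ x ≤ k - 2 ∧ G.Adj s (q x) := by
          intro x hx
          rw [hJdef, Finset.mem_filter, Finset.mem_Icc] at hx
          exact ⟨hx.1.1, hx.1.2, hx.2⟩
        have hJ'card : J'.card = J.card := by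
          rw [hJ'def]
          apply Finset.card_image_of_injOn
          intro x hx y hy hxy
          have hxy' : x - 1 = y - 1 := hxy
          have h1 := hJmem x hx
          have h2 := hJmem y hy
          omega
        have hunion : (J ∪ J').card ≤ k - 1 := by
          have hsub : J ∪ J' ⊆ Finset.Icc 0 (k-2) := by
            intro x hx
            rw [Finset.mem_union] at hx
            rw [Finset.mem_Icc]
            rcases hx with h | h
            · have := hJmem x h
              omega
            · rw [hJ'def, Finset.mem_image] at h
              obtain ⟨y, hy, hyx⟩ := h
              have := hJmem y hy
              omega
          calc (J ∪ J').card ≤ (Finset.Icc 0 (k-2)).card := Finset.card_le_card hsub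
            _ = k - 1 := by rw [Nat.card_Icc]; omega
        have hinter : (J ∩ J').card ≤ (SS.filter (G.Adj s)).card := by
          apply Finset.card_le_card_of_injOn (fun jj => q jj)
          · intro jj hjj
            rw [Finset.mem_coe, Finset.mem_inter] at hjj
            obtain ⟨hjJ, hjJ'⟩ := hjj
            obtain ⟨hjj1, hjjk, hjjadj⟩ := hJmem jj hjJ
            have hsucc : jj + 1 ∈ J := by
              rw [hJ'def, Finset.mem_image] at hjJ'
              obtain ⟨j0, hj0, hj0e⟩ := hjJ'
              have h1 := hJmem j0 hj0
              have : jj + 1 = j0 := by omega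
              rwa [this]
            obtain ⟨-, hsk, hsadj⟩ := hJmem _ hsucc
            rw [Finset.mem_coe, Finset.mem_filter]
            refine ⟨?_, hjjadj⟩
            rw [hSSdef, Finset.mem_filter]
            refine ⟨Finset.mem_univ _, ?_⟩
            have hchord : G.Adj (q 0) (q (jj+1)) := by rw [hq0]; exact hsadj
            obtain ⟨f, hadjf, hf0, hftail, hfpre⟩ := pivot_fn q l hadjq
              (by omega : 1 ≤ jj+1) (by omega : jj + 1 ≤ l) hchord
            have hf0' : f 0 = q jj := by
              have e : jj + 1 - 1 = jj := rfl
              rw [hf0, e]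
            have hfl : f l = xl := by rw [hftail l (by omega), hqlxl]
            have hfpre' : ∀ i, i ≤ jj → f i = q (jj - i) := by
              intro i hi
              exact hfpre i (by omega)
            have hinjf : ∀ a b, a ≤ l → b ≤ l → f a = f b → a = b := by
              intro a b ha hb hab
              rcases le_or_gt a jj with ha' | ha'
              · rcases le_or_gt b jj with hb' | hb'
                · rw [hfpre' a ha', hfpre' b hb'] at hab
                  have := hinjq _ _ (by omega) (by omega) hab
                  omega
                · rw [hfpre' a ha', hftail b (by omega)] at hab
                  have := hinjq _ _ (by omega) hb hab
                  omega
              · rcases le_or_gt b jj with hb' | hb'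
                · rw [hftail a (by omega), hfpre' b hb'] at hab
                  have := hinjq _ _ ha (by omega) hab
                  omega
                · rw [hftail a (by omega), hftail b (by omega)] at hab
                  exact hinjq _ _ ha hb hab
            refine ⟨(walkOfFn (G := G) f l hadjf).copy hf0' hfl, ?_, ?_, ?_⟩
            · rw [Walk.isPath_copy]
              exact isPath_walkOfFn f l hadjf hinjf
            · rw [Walk.length_copy, length_walkOfFn]
            · intro i hik
              rcases le_or_gt i l with hil | hil
              · rw [Walk.getVert_copy, getVert_walkOfFn f l hadjf hil,
                  hftail i (by omega)]
                exact hQt i hik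
              · have e1 : ((walkOfFn (G := G) f l hadjf).copy hf0' hfl).getVert i = xl :=
                  Walk.getVert_of_length_le _ (by rw [Walk.length_copy, length_walkOfFn]; omega)
                have e2 : g i = xl := by
                  rw [hgdef, ← hplen] at *
                  exact p.getVert_of_length_le (by omega)
                rw [e1, e2]
          · intro a ha b hb hab
            rw [Finset.mem_coe, Finset.mem_inter] at ha hb
            have h1 := hJmem a ha.1
            have h2 := hJmem b hb.1
            exact hinjq _ _ (by omega) (by omega) hab
        have h2J : J.card + J'.card = (J ∪ J').card + (J ∩ J').card :=
          (Finset.card_union_add_card_inter J J').symm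
        omega
      have hSSne : SS.Nonempty := ⟨x0, hx0S⟩
      have hSSuniv : SS ≠ Finset.univ := by
        intro hc
        exact hk1S (hc ▸ Finset.mem_univ _)
      exact absurd (step SS hSSne hSSuniv hcost) hcyc

end Master
end EG

/-- Erdős–Gallai: every graph on `n` vertices with more than `(k-1)(n-1)/2` edges
contains a cycle of length at least `k`. -/
theorem stmt_1 {V : Type*} [Fintype V] (G : SimpleGraph V) (n k : ℕ)
    (hn : Fintype.card V = n) (hk : 3 ≤ k)
    (he : (k - 1) * (n - 1) < 2 * G.edgeSet.ncard) :
    ∃ (u : V) (c : G.Walk u u), c.IsCycle ∧ k ≤ c.length := by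
  subst hn
  exact EG.EGaux (Fintype.card V) G k hk le_rfl he
end

section
/- For all integers n ≥ k and a with 1 ≤ a < k/2, the graph H_{n,k,a} contains no cycle of length at least k. -/
/-- The graph `H_{n,k,a}` on vertex set `Fin n`: `A = [0,a)`, `C = [a, k-a)`,
`B = [k-a, n)`.  Its edges are all pairs inside `A ∪ C = [0, k-a)` together with
all pairs between `A` and `B`. -/
def Hgraph (n k a : ℕ) : SimpleGraph (Fin n) where
  Adj i j := i ≠ j ∧ ((i.1 < k - a ∧ j.1 < k - a) ∨ i.1 < a ∨ j.1 < a)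
  symm := ⟨by rintro i j ⟨hne, h⟩; exact ⟨hne.symm, by tauto⟩⟩
  loopless := ⟨by rintro i ⟨hne, -⟩; exact hne rfl⟩

private lemma length_split' {α : Type*} (l : List α) (p : α → Bool) :
    l.length = l.countP p + l.countP (fun x => !p x) := by
  induction l with
  | nil => rfl
  | cons x xs ih => cases hp : p x <;> simp [List.countP_cons, hp, ih] <;> omega

private lemma countP_split' {α : Type*} (l : List α) (p q : α → Bool) :
    l.countP q = l.countP (fun x => q x && p x) + l.countP (fun x => q x && !p x) := by
  induction l with
  | nil => rfl
  | cons x xs ih =>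
      simp only [List.countP_cons, ih]
      cases hq : q x <;> cases hp : p x <;> simp [hq, hp] <;> omega

private lemma countP_ext' {α : Type*} (l : List α) {p q : α → Bool}
    (h : ∀ x ∈ l, p x = q x) : l.countP p = l.countP q := by
  induction l with
  | nil => rfl
  | cons x xs ih =>
      simp only [List.countP_cons, h x List.mem_cons_self,
        ih fun y hy => h y (List.mem_cons_of_mem _ hy)]

private lemma countP_rev' {α : Type*} {l : List α} {p q : α → Bool}
    (h : ∀ x ∈ l, p x = true → q x = true)
    (hc : l.countP q ≤ l.countP p) : ∀ x ∈ l, q x = true → p x = true := by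
  have h1 : l.countP (fun x => q x && p x) = l.countP p := by
    apply le_antisymm
    · exact List.countP_mono_left fun x hx hx' => by
        simp only [Bool.and_eq_true] at hx'; exact hx'.2
    · exact List.countP_mono_left fun x hx hp => by simp [hp, h x hx hp]
  have h2 := countP_split' l p q
  rw [h1] at h2
  have h3 : l.countP (fun x => q x && !p x) = 0 := by omega
  intro x hx hq
  have h4 := List.countP_eq_zero.mp h3 x hx
  simp only [hq, Bool.true_and, Bool.not_eq_true', Bool.not_eq_false] at h4
  exact h4

private lemma countP_Ico' {n : ℕ} {t : List (Fin n)} (ht : t.Nodup) (lo hi : ℕ) :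
    t.countP (fun x => decide (lo ≤ x.1 ∧ x.1 < hi)) ≤ hi - lo := by
  classical
  rw [List.countP_eq_length_filter]
  set s := t.filter (fun x : Fin n => decide (lo ≤ x.1 ∧ x.1 < hi)) with hs
  have hnd : s.Nodup := ht.filter _
  have hmapnd : (s.map Fin.val).Nodup := hnd.map Fin.val_injective
  have h1 : s.length = (s.map Fin.val).toFinset.card := by
    rw [List.toFinset_card_of_nodup hmapnd, List.length_map]
  rw [h1]
  have hsub : (s.map Fin.val).toFinset ⊆ Finset.Ico lo hi := by
    intro m hm
    rw [List.mem_toFinset, List.mem_map] at hm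
    obtain ⟨x, hx, rfl⟩ := hm
    have hx2 := List.of_mem_filter hx
    simp only [decide_eq_true_eq] at hx2
    exact Finset.mem_Ico.mpr hx2
  calc (s.map Fin.val).toFinset.card ≤ (Finset.Ico lo hi).card := Finset.card_le_card hsub
    _ = hi - lo := Nat.card_Ico lo hi

private lemma walk_prop' {V : Type*} {G : SimpleGraph V} (P : V → Prop) :
    ∀ {u v : V} (p : G.Walk u v), (∀ d ∈ p.darts, (P d.fst ↔ P d.snd)) → P u →
      ∀ x ∈ p.support, P x := by
  intro u v p
  induction p with
  | nil =>
      intro _ hu x hx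
      rw [SimpleGraph.Walk.support_nil, List.mem_singleton] at hx
      exact hx ▸ hu
  | cons h q ih =>
      intro hd hu x hx
      rw [SimpleGraph.Walk.support_cons, List.mem_cons] at hx
      rcases hx with rfl | hx
      · exact hu
      · refine ih (fun d hd' => hd d ?_) ?_ x hx
        · rw [SimpleGraph.Walk.darts_cons]; exact List.mem_cons_of_mem _ hd'
        · exact (hd ⟨(_, _), h⟩
            (by rw [SimpleGraph.Walk.darts_cons]; exact List.mem_cons_self)).mp hu

/-- `H_{n,k,a}` contains no cycle of length at least `k`. -/
theorem stmt_3 (n k a : ℕ) (hkn : k ≤ n) (ha : 1 ≤ a) (hak : 2 * a < k) :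
    ∀ (u : Fin n) (c : (Hgraph n k a).Walk u u), c.IsCycle → c.length < k := by
  intro u c hc
  by_contra hlen
  push_neg at hlen
  classical
  set t := c.support.tail with ht
  have htnd : t.Nodup := hc.support_nodup
  have h3 : 3 ≤ c.length := hc.three_le_length
  have htlen : t.length = c.length := by
    rw [ht, List.length_tail, c.length_support]; omega
  set bA : Fin n → Bool := fun x => decide (x.1 < a) with hbA
  set bB : Fin n → Bool := fun x => decide (k - a ≤ x.1) with hbB
  set bC : Fin n → Bool := fun x => decide (a ≤ x.1 ∧ x.1 < k - a) with hbC
  -- dart adjacency facts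
  have hadj : ∀ d : (Hgraph n k a).Dart,
      d.fst ≠ d.snd ∧ ((d.fst.1 < k - a ∧ d.snd.1 < k - a) ∨ d.fst.1 < a ∨ d.snd.1 < a) :=
    fun d => d.adj
  have hadjBA : ∀ d : (Hgraph n k a).Dart, bB d.snd = true → bA d.fst = true := by
    intro d hd
    obtain ⟨-, hcase⟩ := hadj d
    simp only [hbA, hbB, decide_eq_true_eq] at hd ⊢
    omega
  have hadjBA' : ∀ d : (Hgraph n k a).Dart, bB d.fst = true → bA d.snd = true := by
    intro d hd
    obtain ⟨-, hcase⟩ := hadj d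
    simp only [hbA, hbB, decide_eq_true_eq] at hd ⊢
    omega
  -- counting via darts
  have hsndP : ∀ p : Fin n → Bool, c.darts.countP (fun d => p d.snd) = t.countP p := by
    intro p
    have h1 : c.darts.map (·.snd) = t := by rw [ht]; exact c.map_snd_darts
    calc c.darts.countP (fun d => p d.snd) = (c.darts.map (·.snd)).countP p := by
          rw [List.countP_map]; rfl
      _ = t.countP p := by rw [h1]
  -- the dropLast list is a permutation of the tail
  have happ := c.map_fst_darts_append
  rw [c.support_eq_cons, ← ht] at happ
  obtain ⟨rest, hrest⟩ : ∃ rest, c.darts.map (·.fst) = u :: rest := by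
    cases hf : c.darts.map (·.fst) with
    | nil =>
        exfalso
        have : c.darts.length = c.length := c.length_darts
        rw [List.map_eq_nil_iff] at hf
        rw [hf] at this
        simp at this
        omega
    | cons y rest =>
        rw [hf] at happ
        simp only [List.cons_append, List.cons.injEq] at happ
        exact ⟨rest, by rw [happ.1]⟩
  have htval : t = rest ++ [u] := by
    rw [hrest] at happ
    simp only [List.cons_append, List.cons.injEq, true_and] at happ
    exact happ.symm
  have hperm : (c.darts.map (·.fst)).Perm t := by
    rw [hrest, htval]
    exact (List.perm_append_comm (l₁ := [u]) (l₂ := rest))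
  have hfstP : ∀ p : Fin n → Bool, c.darts.countP (fun d => p d.fst) = t.countP p := by
    intro p
    calc c.darts.countP (fun d => p d.fst) = (c.darts.map (·.fst)).countP p := by
          rw [List.countP_map]; rfl
      _ = t.countP p := hperm.countP_eq p
  -- basic count bounds
  have hBA : t.countP bB ≤ t.countP bA := by
    rw [← hsndP bB, ← hfstP bA]
    exact List.countP_mono_left fun d hd hbb => hadjBA d hbb
  have hA_le : t.countP bA ≤ a := by
    calc t.countP bA ≤ t.countP (fun x => decide (0 ≤ x.1 ∧ x.1 < a)) := by
          apply List.countP_mono_left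
          intro x hx hxa
          simp only [hbA, decide_eq_true_eq] at hxa ⊢
          omega
      _ ≤ a - 0 := countP_Ico' htnd 0 a
      _ = a := by omega
  have hC_le : t.countP bC ≤ (k - a) - a := by
    have := countP_Ico' htnd a (k - a)
    rw [← hbC] at this
    exact this
  -- split the length
  have hsplit : t.length = t.countP bA + (t.countP bB + t.countP bC) := by
    rw [length_split' t bA]
    congr 1
    rw [countP_split' t bB (fun x => !bA x)]
    congr 1
    · apply countP_ext'
      intro x hx
      rw [Bool.eq_iff_iff]
      simp only [hbA, hbB, Bool.and_eq_true, Bool.not_eq_true', decide_eq_true_eq,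
        decide_eq_false_iff_not]
      omega
    · apply countP_ext'
      intro x hx
      rw [Bool.eq_iff_iff]
      simp only [hbA, hbB, hbC, Bool.and_eq_true, Bool.not_eq_true', decide_eq_true_eq,
        decide_eq_false_iff_not]
      omega
  -- equality throughout
  have hcA : t.countP bA = a := by omega
  have hcB : t.countP bB = a := by omega
  have hcC : 0 < t.countP bC := by omega
  -- extremal structure: every dart out of A goes to B, every dart into A comes from B
  have hd1 : ∀ d ∈ c.darts, bA d.fst = true → bB d.snd = true := by
    apply countP_rev' (fun d hd => hadjBA d)
    rw [hfstP, hsndP]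
    omega
  have hd2 : ∀ d ∈ c.darts, bA d.snd = true → bB d.fst = true := by
    apply countP_rev' (fun d hd => hadjBA' d)
    rw [hfstP, hsndP]
    omega
  -- darts preserve membership in C
  have hiff : ∀ d ∈ c.darts, ((a ≤ d.fst.1 ∧ d.fst.1 < k - a) ↔ (a ≤ d.snd.1 ∧ d.snd.1 < k - a)) := by
    intro d hd
    obtain ⟨-, hcase⟩ := hadj d
    have h1 := hd1 d hd
    have h2 := hd2 d hd
    simp only [hbA, hbB, decide_eq_true_eq] at h1 h2
    omega
  -- witnesses
  obtain ⟨c0, hc0t, hc0C⟩ := List.countP_pos_iff.mp hcC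
  obtain ⟨x0, hx0t, hx0A⟩ := List.countP_pos_iff.mp (show 0 < t.countP bA by omega)
  simp only [hbC, decide_eq_true_eq] at hc0C
  simp only [hbA, decide_eq_true_eq] at hx0A
  have hc0s : c0 ∈ c.support := List.mem_of_mem_tail (ht ▸ hc0t)
  have hx0s : x0 ∈ c.support := List.mem_of_mem_tail (ht ▸ hx0t)
  by_cases hu : a ≤ u.1 ∧ u.1 < k - a
  · have := walk_prop' (fun x : Fin n => a ≤ x.1 ∧ x.1 < k - a) c hiff hu x0 hx0s
    omega
  · have := walk_prop' (fun x : Fin n => ¬(a ≤ x.1 ∧ x.1 < k - a)) c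
      (fun d hd => not_congr (hiff d hd)) hu c0 hc0s
    exact this hc0C
end

section
/- Let n ≥ 4 and G be a 2-connected graph on n vertices, let v be a vertex, and let W(v) = {w ∈ N(v) : N[v] ⊄ N[w]}. If W(v) is nonempty, then there exists w ∈ W(v) such that the graph obtained from G by contracting the edge vw is 2-connected. -/
/-- The simple graph obtained from `H` by contracting the edge `vw`: the vertex
`w` is removed and `v` becomes the merged vertex, adjacent to all former
neighbors of `v` and of `w`. -/
def contractEdge {V : Type*} (H : SimpleGraph V) (v w : V) : SimpleGraph {x : V // x ≠ w} where
  Adj a b := (H.Adj a.1 b.1 ∨ (a.1 = v ∧ H.Adj w b.1) ∨ (b.1 = v ∧ H.Adj w a.1)) ∧ a ≠ b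
  symm := by
    constructor
    rintro a b ⟨h, hne⟩
    refine ⟨?_, hne.symm⟩
    rcases h with h | ⟨h1, h2⟩ | ⟨h1, h2⟩
    · exact Or.inl h.symm
    · exact Or.inr (Or.inr ⟨h1, h2⟩)
    · exact Or.inr (Or.inl ⟨h1, h2⟩)
  loopless := ⟨by rintro a ⟨-, hne⟩; exact hne rfl⟩

/-- A graph is 2-connected if it has at least 3 vertices, is connected, and
remains connected after deleting any single vertex. -/
def TwoConnected {V : Type*} [Fintype V] (G : SimpleGraph V) : Prop :=
  3 ≤ Fintype.card V ∧ G.Connected ∧ ∀ v : V, (G.induce {w | w ≠ v}).Connected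

open SimpleGraph

set_option linter.unusedSectionVars false

namespace CAux
variable {V : Type*} {G : SimpleGraph V}

/-- `Rel G K a b`: there is a walk from `a` to `b` in `G` avoiding the set `K`. -/
def Rel (G : SimpleGraph V) (K : Set V) (a b : V) : Prop :=
  ∃ p : G.Walk a b, ∀ z ∈ p.support, z ∉ K

lemma Rel.left {K : Set V} {a b : V} (h : Rel G K a b) : a ∉ K :=
  h.choose_spec a h.choose.start_mem_support

lemma Rel.right {K : Set V} {a b : V} (h : Rel G K a b) : b ∉ K :=
  h.choose_spec b h.choose.end_mem_support

lemma Rel.refl {K : Set V} {a : V} (ha : a ∉ K) : Rel G K a a :=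
  ⟨Walk.nil, by simpa using ha⟩

lemma Rel.symm {K : Set V} {a b : V} (h : Rel G K a b) : Rel G K b a := by
  obtain ⟨p, hp⟩ := h
  exact ⟨p.reverse, by simpa [Walk.support_reverse] using hp⟩

lemma Rel.trans {K : Set V} {a b c : V} (h : Rel G K a b) (h' : Rel G K b c) :
    Rel G K a c := by
  obtain ⟨p, hp⟩ := h; obtain ⟨q, hq⟩ := h'
  refine ⟨p.append q, fun z hz => ?_⟩
  rw [Walk.mem_support_append_iff] at hz
  exact hz.elim (hp z) (hq z)

lemma rel_of_adj {K : Set V} {a b : V} (h : G.Adj a b) (ha : a ∉ K) (hb : b ∉ K) :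
    Rel G K a b :=
  ⟨h.toWalk, by intro z hz; simp [Walk.support_cons] at hz; rcases hz with rfl | rfl <;> assumption⟩

/-- walk in `G` with support in `s` gives reachability in the induced graph. -/
lemma reach_of_walk {s : Set V} : ∀ {a b : V} (p : G.Walk a b),
    (∀ z ∈ p.support, z ∈ s) → ∀ (ha : a ∈ s) (hb : b ∈ s),
    (G.induce s).Reachable ⟨a, ha⟩ ⟨b, hb⟩ := by
  intro a b p
  induction p with
  | nil => intro _ ha hb; rfl
  | @cons a c b h q ih =>
    intro hs ha hb
    have hc : c ∈ s := hs c (by simp [Walk.support_cons])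
    have hadj : (G.induce s).Adj ⟨a, ha⟩ ⟨c, hc⟩ := h
    exact hadj.reachable.trans (ih (fun z hz => hs z (by simp [Walk.support_cons, hz])) hc hb)

/-- reachability in the induced graph gives a walk in `G` with support in `s`. -/
lemma walk_of_reach {s : Set V} {a b : ↥s} (h : (G.induce s).Reachable a b) :
    ∃ p : G.Walk a.1 b.1, ∀ z ∈ p.support, z ∈ s := by
  obtain ⟨w⟩ := h
  induction w with
  | nil => exact ⟨Walk.nil, fun z hz => by simp at hz; exact hz ▸ Subtype.coe_prop _⟩
  | @cons a c b h q ih =>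
    obtain ⟨p, hp⟩ := ih
    refine ⟨Walk.cons h p, ?_⟩
    intro z hz
    change z ∈ (a.1 :: p.support) at hz
    rw [List.mem_cons] at hz
    rcases hz with rfl | hz
    · exact a.2
    · exact hp z hz

/-- first-hit lemma: if a walk ends in `K` but starts outside, and `t` is the only
vertex of `K` on the walk, there is a vertex adjacent to `t` that is `Rel`-reachable. -/
lemma exists_adj_rel {K : Set V} : ∀ {a t : V} (p : G.Walk a t), t ∈ K → a ∉ K →
    (∀ z ∈ p.support, z ∈ K → z = t) →
    ∃ z, G.Adj z t ∧ Rel G K a z := by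
  intro a t p
  induction p with
  | nil => intro ht ha _; exact absurd ht ha
  | @cons a c t h q ih =>
    intro ht ha hsup
    by_cases hc : c ∈ K
    · have : c = t := hsup c (by simp [Walk.support_cons]) hc
      subst this
      exact ⟨a, h, Rel.refl ha⟩
    · obtain ⟨z, hz1, hz2⟩ := ih ht hc (fun z hz => hsup z (by simp [Walk.support_cons, hz]))
      exact ⟨z, hz1, (rel_of_adj h ha hc).trans hz2⟩

/-- swapping the second removed vertex: a walk avoiding `{v,w}` starting at `x`
cannot pass through `u` when `u` is not `Rel`-reachable from `x`. -/
lemma relSwap [DecidableEq V] {v w u x : V} (hu : ¬ Rel G {v, w} x u) {y : V}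
    (h : Rel G {v, w} x y) : Rel G {v, u} x y := by
  obtain ⟨p, hp⟩ := h
  have hnu : ∀ z ∈ p.support, z ≠ u := by
    intro z hz hzu
    exact hu (hzu ▸ ⟨p.takeUntil z hz, fun a ha => hp a (Walk.support_takeUntil_subset _ _ ha)⟩)
  refine ⟨p, fun z hz => ?_⟩
  have := hp z hz
  simp only [Set.mem_insert_iff, Set.mem_singleton_iff] at this ⊢
  push_neg at this ⊢
  exact ⟨this.1, hnu z hz⟩

end CAux

namespace CAux2
open CAux
variable {V : Type*} [Fintype V] [DecidableEq V] {G : SimpleGraph V}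

/-- The set of vertices separated from `x` after deleting `{v, w}`. -/
def Bset (G : SimpleGraph V) (v w x : V) : Set V :=
  {y | y ∉ ({v, w} : Set V) ∧ ¬ Rel G {v, w} x y}

/-- The key combinatorial lemma, proved by strong induction on the size of `Bset`. -/
lemma key (hdel : ∀ c : V, (G.induce {y | y ≠ c}).Connected) (v : V) :
    ∀ (n : ℕ) (w x : V), (Bset G v w x).ncard = n → G.Adj v w → G.Adj v x → ¬ G.Adj w x →
    x ≠ w →
    ∃ u y, G.Adj v u ∧ G.Adj v y ∧ ¬ G.Adj u y ∧ y ≠ u ∧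
      ∀ a b, a ∉ ({v, u} : Set V) → b ∉ ({v, u} : Set V) → Rel G {v, u} a b := by
  intro n
  induction n using Nat.strong_induction_on with
  | _ n ih =>
  intro w x hcard hvw hvx hwx hxw
  have hxv : x ≠ v := hvx.ne'
  have hwv : w ≠ v := hvw.ne'
  have hxK : x ∉ ({v, w} : Set V) := by simp [hxv, hxw]
  by_cases hB : Bset G v w x = ∅
  · refine ⟨w, x, hvw, hvx, hwx, hxw, ?_⟩
    have hall : ∀ y, y ∉ ({v, w} : Set V) → Rel G {v, w} x y := by
      intro y hy
      by_contra hr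
      exact (Set.eq_empty_iff_forall_notMem.mp hB y) ⟨hy, hr⟩
    intro a b ha hb
    exact (hall a ha).symm.trans (hall b hb)
  · obtain ⟨b, hbK, hbrel⟩ := Set.nonempty_iff_ne_empty.mpr hB
    have hbw : b ≠ w := fun h => hbK (by simp [h])
    have hbv : b ≠ v := fun h => hbK (by simp [h])
    -- find a neighbor u of v in Bset, via a walk from b to v avoiding w
    have hreach := (hdel w).preconnected ⟨b, hbw⟩ ⟨v, hwv.symm⟩
    obtain ⟨p, hp⟩ := walk_of_reach hreach
    obtain ⟨u, huv, hbu⟩ := exists_adj_rel (K := ({v, w} : Set V)) p (by simp) hbK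
      (by
        intro z hz hzK
        simp only [Set.mem_insert_iff, Set.mem_singleton_iff] at hzK
        rcases hzK with rfl | rfl
        · rfl
        · exact absurd rfl (hp z hz))
    have huK : u ∉ ({v, w} : Set V) := hbu.right
    have hxu_rel : ¬ Rel G {v, w} x u := fun h => hbrel (h.trans hbu.symm)
    have hux : ¬ G.Adj u x := fun h => hxu_rel (rel_of_adj h.symm hxK huK)
    have hxu : x ≠ u := fun h => hxu_rel (h ▸ Rel.refl hxK)
    have huw : u ≠ w := fun h => huK (by simp [h])
    have hunv : u ≠ v := fun h => huK (by simp [h])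
    -- Rel {v,u} x w
    have hreach2 := (hdel v).preconnected ⟨x, hxv⟩ ⟨w, hwv⟩
    obtain ⟨q, hq⟩ := walk_of_reach hreach2
    obtain ⟨z, hzw, hxz⟩ := exists_adj_rel (K := ({v, w} : Set V)) q (by simp) hxK
      (by
        intro z hz hzK
        simp only [Set.mem_insert_iff, Set.mem_singleton_iff] at hzK
        rcases hzK with rfl | rfl
        · exact absurd rfl (hq z hz)
        · rfl)
    have hzK : z ∉ ({v, w} : Set V) := hxz.right
    have hzv : z ≠ v := fun h => hzK (by simp [h])
    have hzu : z ≠ u := fun h => hxu_rel (h ▸ hxz)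
    have hxw_rel : Rel G {v, u} x w :=
      (relSwap hxu_rel hxz).trans
        (rel_of_adj hzw (by simp [hzv, hzu]) (by simp [hwv, huw.symm]))
    have hss : Bset G v u x ⊂ Bset G v w x := by
      constructor
      · rintro y ⟨hyK, hyrel⟩
        have hyv : y ≠ v := fun h => hyK (by simp [h])
        have hyu : y ≠ u := fun h => hyK (by simp [h])
        have hyw : y ≠ w := fun h => hyrel (h ▸ hxw_rel)
        exact ⟨by simp [hyv, hyw], fun h => hyrel (relSwap hxu_rel h)⟩
      · intro hsub
        have : u ∈ Bset G v u x := hsub ⟨huK, hxu_rel⟩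
        exact this.1 (by simp)
    have hlt : (Bset G v u x).ncard < n :=
      hcard ▸ Set.ncard_lt_ncard hss (Set.toFinite _)
    exact ih _ hlt u x rfl huv.symm hvx hux hxu

end CAux2

namespace CAux3
variable {V : Type*} [DecidableEq V] {G : SimpleGraph V}

lemma contractLift {v u : V} :
    ∀ {s t : V} (p : G.Walk s t), (∀ z ∈ p.support, z ≠ u) →
    ∀ (hs : s ≠ u) (ht : t ≠ u), (contractEdge G v u).Reachable ⟨s, hs⟩ ⟨t, ht⟩ := by
  intro s t p
  induction p with
  | nil => intro _ hs ht; rfl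
  | @cons s c t h q ih =>
    intro hsup hs ht
    have hc : c ≠ u := hsup c (by simp [Walk.support_cons])
    have hadj : (contractEdge G v u).Adj ⟨s, hs⟩ ⟨c, hc⟩ :=
      ⟨Or.inl h, fun hh => h.ne (congrArg Subtype.val hh)⟩
    exact hadj.reachable.trans (ih (fun z hz => hsup z (by simp [Walk.support_cons, hz])) hc ht)

lemma liftDelV {v u : V} (c : {x : V // x ≠ u}) (hc : c.1 = v) :
    ∀ {s t : V} (p : G.Walk s t), (∀ z ∈ p.support, z ∉ ({v, u} : Set V)) →
    ∀ (hs1 : s ≠ u) (hs2 : (⟨s, hs1⟩ : {x : V // x ≠ u}) ≠ c)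
      (ht1 : t ≠ u) (ht2 : (⟨t, ht1⟩ : {x : V // x ≠ u}) ≠ c),
    ((contractEdge G v u).induce {a | a ≠ c}).Reachable ⟨⟨s, hs1⟩, hs2⟩ ⟨⟨t, ht1⟩, ht2⟩ := by
  intro s t p
  induction p with
  | nil => intro _ hs1 hs2 ht1 ht2; rfl
  | @cons s d t h q ih =>
    intro hsup hs1 hs2 ht1 ht2
    have hdK : d ∉ ({v, u} : Set V) := hsup d (by simp [Walk.support_cons])
    have hd1 : d ≠ u := fun hh => hdK (by simp [hh])
    have hdv : d ≠ v := fun hh => hdK (by simp [hh])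
    have hd2 : (⟨d, hd1⟩ : {x : V // x ≠ u}) ≠ c :=
      fun hh => hdv (by rw [← hc]; exact congrArg Subtype.val hh)
    have hadj : ((contractEdge G v u).induce {a | a ≠ c}).Adj ⟨⟨s, hs1⟩, hs2⟩ ⟨⟨d, hd1⟩, hd2⟩ :=
      ⟨Or.inl h, fun hh => h.ne (congrArg (fun x => x.1) hh)⟩
    exact hadj.reachable.trans
      (ih (fun z hz => hsup z (by simp [Walk.support_cons, hz])) hd1 hd2 ht1 ht2)

lemma liftDelMap {v u : V} (hvu : G.Adj v u) (c : {x : V // x ≠ u}) (hc : c.1 ≠ v) :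
    ∀ {s t : V} (p : G.Walk s t), (∀ z ∈ p.support, z ≠ c.1) →
    ∀ (hs1 : (if s = u then v else s) ≠ u)
      (hs2 : (⟨if s = u then v else s, hs1⟩ : {x : V // x ≠ u}) ≠ c)
      (ht1 : (if t = u then v else t) ≠ u)
      (ht2 : (⟨if t = u then v else t, ht1⟩ : {x : V // x ≠ u}) ≠ c),
    ((contractEdge G v u).induce {a | a ≠ c}).Reachable ⟨⟨_, hs1⟩, hs2⟩ ⟨⟨_, ht1⟩, ht2⟩ := by
  intro s t p
  induction p with
  | nil => intro _ hs1 hs2 ht1 ht2; rfl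
  | @cons s d t h q ih =>
    intro hsup hs1 hs2 ht1 ht2
    have hsc : s ≠ c.1 := hsup s (by simp [Walk.support_cons])
    have hdc : d ≠ c.1 := hsup d (by simp [Walk.support_cons])
    have hd1 : (if d = u then v else d) ≠ u := by
      split
      · exact hvu.ne
      · assumption
    have hd2 : (⟨if d = u then v else d, hd1⟩ : {x : V // x ≠ u}) ≠ c := by
      intro hh
      have := congrArg Subtype.val hh
      simp only at this
      split at this
      · exact hc this.symm
      · exact hdc this
    have htail : ∀ z ∈ q.support, z ≠ c.1 :=
      fun z hz => hsup z (by simp [Walk.support_cons, hz])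
    by_cases heq : (if s = u then v else s) = (if d = u then v else d)
    · have e : (⟨⟨if s = u then v else s, hs1⟩, hs2⟩ :
          {a : {x : V // x ≠ u} // a ≠ c}) = ⟨⟨if d = u then v else d, hd1⟩, hd2⟩ :=
        Subtype.ext (Subtype.ext heq)
      rw [e]
      exact ih htail hd1 hd2 ht1 ht2
    · have hadj : ((contractEdge G v u).induce {a | a ≠ c}).Adj
          ⟨⟨if s = u then v else s, hs1⟩, hs2⟩ ⟨⟨if d = u then v else d, hd1⟩, hd2⟩ := by
        refine ⟨?_, fun hh => heq (congrArg Subtype.val hh)⟩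
        by_cases hsu : s = u
        · have hdu : d ≠ u := fun hh => h.ne (hsu.trans hh.symm)
          simp only [if_pos hsu, if_neg hdu]
          exact Or.inr (Or.inl ⟨rfl, hsu ▸ h⟩)
        · by_cases hdu : d = u
          · simp only [if_neg hsu, if_pos hdu]
            exact Or.inr (Or.inr ⟨rfl, hdu ▸ h.symm⟩)
          · simp only [if_neg hsu, if_neg hdu]
            exact Or.inl h
      exact hadj.reachable.trans (ih htail hd1 hd2 ht1 ht2)

end CAux3

open CAux CAux2 CAux3 in
/-- If `G` is 2-connected on `n ≥ 4` vertices, `v` is a vertex, and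
`W(v) = {w ∈ N(v) : N[v] ⊄ N[w]}` is nonempty, then some `w ∈ W(v)` is such that
contracting `vw` yields a 2-connected graph. -/
theorem stmt_9 {V : Type*} [Fintype V] [DecidableEq V] (G : SimpleGraph V)
    (hn : 4 ≤ Fintype.card V) (h2 : TwoConnected G) (v : V)
    (hW : ∃ w, G.Adj v w ∧ ¬ insert v (G.neighborSet v) ⊆ insert w (G.neighborSet w)) :
    ∃ w, (G.Adj v w ∧ ¬ insert v (G.neighborSet v) ⊆ insert w (G.neighborSet w)) ∧
      TwoConnected (contractEdge G v w) := by
  obtain ⟨-, hconn, hdel⟩ := h2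
  obtain ⟨w0, hvw0, hns⟩ := hW
  obtain ⟨x0, hx0mem, hx0not⟩ := Set.not_subset.mp hns
  have hx0ne : x0 ≠ w0 := by
    intro h; exact hx0not (by simp [h])
  have hx0nadj : ¬ G.Adj w0 x0 := by
    intro h; exact hx0not (by simp [h])
  have hvx0 : G.Adj v x0 := by
    rcases hx0mem with h | h
    · exact absurd (by simp [Set.mem_insert_iff, h ▸ hvw0.symm] :
        x0 ∈ insert w0 (G.neighborSet w0)) hx0not
    · exact h
  obtain ⟨u, y, hvu, hvy, huy, hyu, hRel⟩ :=
    key hdel v (Bset G v w0 x0).ncard w0 x0 rfl hvw0 hvx0 hx0nadj hx0ne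
  have hvneu : v ≠ u := hvu.ne
  have hyv : y ≠ v := hvy.ne'
  have hyK : y ∉ ({v, u} : Set V) := by simp [hyv, hyu]
  have hcard : Fintype.card {x : V // x ≠ u} = Fintype.card V - 1 := by
    have h1 := Fintype.card_subtype_compl (fun x : V => x = u)
    rw [Fintype.card_subtype_eq] at h1
    exact h1
  refine ⟨u, ⟨hvu, ?_⟩, ?_, ?_, ?_⟩
  · exact Set.not_subset.mpr ⟨y, by simp [hvy], by simp [hyu, huy]⟩
  · -- at least 3 vertices
    rw [hcard]; omega
  · -- connected
    have hto : ∀ a : {x : V // x ≠ u}, (contractEdge G v u).Reachable a ⟨v, hvneu⟩ := by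
      intro a
      by_cases hav : a.1 = v
      · exact (Subtype.ext hav : a = ⟨v, hvneu⟩) ▸ Reachable.refl _
      · have haK : a.1 ∉ ({v, u} : Set V) := by simp [hav, a.2]
        obtain ⟨p, hp⟩ := hRel a.1 y haK hyK
        have h1 : (contractEdge G v u).Reachable ⟨a.1, a.2⟩ ⟨y, hyu⟩ :=
          contractLift p (fun z hz h => hp z hz (by simp [h])) a.2 hyu
        have h2 : (contractEdge G v u).Adj ⟨y, hyu⟩ ⟨v, hvneu⟩ :=
          ⟨Or.inl hvy.symm, fun hh => hyv (congrArg Subtype.val hh)⟩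
        exact h1.trans h2.reachable
    exact (connected_iff _).mpr ⟨fun a b => (hto a).trans (hto b).symm, ⟨⟨v, hvneu⟩⟩⟩
  · -- deleting any vertex keeps it connected
    intro c
    have hcard2 : 1 < Fintype.card {x : V // x ≠ u} := by rw [hcard]; omega
    obtain ⟨b0, hb0⟩ := Fintype.exists_ne_of_one_lt_card hcard2 c
    refine (connected_iff _).mpr ⟨?_, ⟨⟨b0, hb0⟩⟩⟩
    intro a b
    by_cases hcv : c.1 = v
    · -- deleting the merged vertex: use that G - {v,u} is connected
      have ha1 : a.1.1 ∉ ({v, u} : Set V) := by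
        simp only [Set.mem_insert_iff, Set.mem_singleton_iff]
        push_neg
        exact ⟨fun h => a.2 (Subtype.ext (h.trans hcv.symm)), a.1.2⟩
      have hb1 : b.1.1 ∉ ({v, u} : Set V) := by
        simp only [Set.mem_insert_iff, Set.mem_singleton_iff]
        push_neg
        exact ⟨fun h => b.2 (Subtype.ext (h.trans hcv.symm)), b.1.2⟩
      obtain ⟨p, hp⟩ := hRel a.1.1 b.1.1 ha1 hb1
      exact liftDelV c hcv p hp a.1.2 a.2 b.1.2 b.2
    · -- deleting an ordinary vertex: use that G - c is connected
      have hac : a.1.1 ≠ c.1 := fun h => a.2 (Subtype.ext h)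
      have hbc : b.1.1 ≠ c.1 := fun h => b.2 (Subtype.ext h)
      obtain ⟨p, hp⟩ := walk_of_reach ((hdel c.1).preconnected ⟨a.1.1, hac⟩ ⟨b.1.1, hbc⟩)
      have ea : (if a.1.1 = u then v else a.1.1) = a.1.1 := if_neg a.1.2
      have eb : (if b.1.1 = u then v else b.1.1) = b.1.1 := if_neg b.1.2
      have hs1 : (if a.1.1 = u then v else a.1.1) ≠ u := by rw [ea]; exact a.1.2
      have ht1 : (if b.1.1 = u then v else b.1.1) ≠ u := by rw [eb]; exact b.1.2
      have hs2 : (⟨if a.1.1 = u then v else a.1.1, hs1⟩ : {x : V // x ≠ u}) ≠ c := by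
        intro hh
        apply a.2
        apply Subtype.ext
        have h3 : (if a.1.1 = u then v else a.1.1) = c.1 := congrArg Subtype.val hh
        rwa [ea] at h3
      have ht2 : (⟨if b.1.1 = u then v else b.1.1, ht1⟩ : {x : V // x ≠ u}) ≠ c := by
        intro hh
        apply b.2
        apply Subtype.ext
        have h3 : (if b.1.1 = u then v else b.1.1) = c.1 := congrArg Subtype.val hh
        rwa [eb] at h3
      have hres := liftDelMap hvu c hcv p hp hs1 hs2 ht1 ht2
      have e1 : (⟨⟨if a.1.1 = u then v else a.1.1, hs1⟩, hs2⟩ :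
          {x : {x : V // x ≠ u} // x ≠ c}) = a := Subtype.ext (Subtype.ext ea)
      have e2 : (⟨⟨if b.1.1 = u then v else b.1.1, ht1⟩, ht2⟩ :
          {x : {x : V // x ≠ u} // x ≠ c}) = b := Subtype.ext (Subtype.ext eb)
      rwa [e1, e2] at hres
end

section
/- If G is a 2-connected graph and C is a longest cycle in G, then no two consecutive vertices of C form a vertex cut of G. -/
open SimpleGraph Walk

section Aux

variable {V : Type*} {G : SimpleGraph V}

lemma mem_tail_support_of_closed {u : V} (p : G.Walk u u) (h : p ≠ Walk.nil) :
    u ∈ p.support.tail := by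
  cases p with
  | nil => exact absurd rfl h
  | cons h' q => simpa using q.end_mem_support

/-- In a path starting at `x`, an edge containing `x` must be the first edge. -/
lemma path_head {x w y : V} (p : G.Walk x w) (hp : p.IsPath) (he : s(x, y) ∈ p.edges) :
    ∃ (h : G.Adj x y) (q : G.Walk y w), p = Walk.cons h q := by
  cases p with
  | nil => simp at he
  | @cons _ v _ h' q' =>
    rw [Walk.cons_isPath_iff] at hp
    rw [Walk.edges_cons, List.mem_cons] at he
    rcases he with he | he
    · have hyv : y = v := by
        rw [Sym2.eq_iff] at he
        rcases he with ⟨-, h⟩ | ⟨h1, -⟩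
        · exact h
        · exact absurd h1 h'.ne
      subst hyv
      exact ⟨h', q', rfl⟩
    · exact absurd (q'.fst_mem_support_of_mem_edges he) hp.2

/-- Decompose a cycle at `x` containing the edge `s(x,y)` as that edge plus a path. -/
lemma cycle_decomp {x y : V} (d : G.Walk x x) (hd : d.IsCycle) (he : s(x, y) ∈ d.edges) :
    ∃ (h : G.Adj x y) (p : G.Walk y x), p.IsPath ∧ s(x, y) ∉ p.edges ∧
      p.length + 1 = d.length ∧ (∀ w ∈ p.support, w ∈ d.support) ∧
      (∀ w ∈ d.support, w ∈ p.support) := by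
  cases d with
  | nil => simp at he
  | @cons _ v _ h' p' =>
    rw [Walk.cons_isCycle_iff] at hd
    obtain ⟨hp', hep'⟩ := hd
    rw [Walk.edges_cons, List.mem_cons] at he
    by_cases hvy : v = y
    · subst hvy
      refine ⟨h', p', hp', hep', by simp, ?_, ?_⟩
      · intro w hw; simp [Walk.support_cons, hw]
      · intro w hw
        rw [Walk.support_cons, List.mem_cons] at hw
        rcases hw with rfl | hw
        · exact p'.end_mem_support
        · exact hw
    · have hey : s(x, y) ∈ p'.edges := by
        rcases he with he | he
        · exfalso
          rw [Sym2.eq_iff] at he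
          rcases he with ⟨-, h⟩ | ⟨h1, -⟩
          · exact hvy h.symm
          · exact h'.ne h1
        · exact he
      obtain ⟨hA, q, hq⟩ := path_head p'.reverse hp'.reverse
        (by rw [Walk.edges_reverse, List.mem_reverse]; exact hey)
      have hqpath : q.IsPath ∧ x ∉ q.support := by
        have := hp'.reverse
        rw [hq, Walk.cons_isPath_iff] at this
        exact this
      have hq_supp : ∀ w, w ∈ p'.support ↔ (w = x ∨ w ∈ q.support) := by
        intro w
        rw [← List.mem_reverse, ← Walk.support_reverse, hq, Walk.support_cons, List.mem_cons]
      have hqlen : p'.length = q.length + 1 := by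
        have := congrArg Walk.length hq
        simpa using this
      refine ⟨hA, q.append (Walk.cons h'.symm Walk.nil), ?_, ?_, ?_, ?_, ?_⟩
      · rw [Walk.isPath_def, Walk.support_append]
        simp only [Walk.support_cons, Walk.support_nil, List.tail_cons]
        rw [List.nodup_append]
        refine ⟨hqpath.1.support_nodup, List.nodup_singleton x, ?_⟩
        intro a ha b hax hab
        rw [List.mem_singleton] at hax
        subst hax
        subst hab
        exact hqpath.2 ha
      · rw [Walk.edges_append]
        simp only [Walk.edges_cons, Walk.edges_nil, List.mem_append, List.mem_cons,
          List.not_mem_nil, or_false]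
        rintro (h | h)
        · exact hqpath.2 (q.fst_mem_support_of_mem_edges h)
        · rw [Sym2.eq_iff] at h
          rcases h with ⟨h1, -⟩ | ⟨-, h2⟩
          · exact h'.ne h1
          · exact hvy h2.symm
      · simp [Walk.length_append, hqlen]
      · intro w hw
        rw [Walk.mem_support_append_iff] at hw
        rcases hw with hw | hw
        · rw [Walk.support_cons, List.mem_cons]
          exact Or.inr ((hq_supp w).2 (Or.inr hw))
        · simp only [Walk.support_cons, Walk.support_nil, List.mem_cons, List.not_mem_nil,
            or_false] at hw
          rcases hw with rfl | rfl
          · rw [Walk.support_cons, List.mem_cons]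
            exact Or.inr (p'.start_mem_support)
          · simp [Walk.support_cons]
      · intro w hw
        rw [Walk.support_cons, List.mem_cons] at hw
        rw [Walk.mem_support_append_iff]
        rcases hw with rfl | hw
        · right; simp [Walk.support_cons]
        · rcases (hq_supp w).1 hw with rfl | hw
          · right; simp [Walk.support_cons]
          · exact Or.inl hw

/-- A walk whose support lies in `s` gives reachability in the induced graph. -/
lemma reach_of_walk {s : Set V} {a b : V} (p : G.Walk a b)
    (hp : ∀ w ∈ p.support, w ∈ s) (ha : a ∈ s) (hb : b ∈ s) :
    (G.induce s).Reachable ⟨a, ha⟩ ⟨b, hb⟩ := by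
  induction p with
  | nil => rfl
  | @cons u v w h q ih =>
    have hv : v ∈ s := hp v (by simp)
    have h1 : (G.induce s).Adj ⟨u, ha⟩ ⟨v, hv⟩ := h
    exact h1.reachable.trans (ih (fun w hw => hp w (by simp [hw])) hv hb)

lemma reach_of_mem_support {s : Set V} {a b : V} (p : G.Walk a b)
    (hp : ∀ w ∈ p.support, w ∈ s) {w z : V} (hw : w ∈ p.support) (hz : z ∈ p.support)
    (hws : w ∈ s) (hzs : z ∈ s) : (G.induce s).Reachable ⟨w, hws⟩ ⟨z, hzs⟩ := by
  classical
  have ha : a ∈ s := hp a p.start_mem_support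
  have key : ∀ (w : V) (hw : w ∈ p.support) (hws : w ∈ s),
      (G.induce s).Reachable ⟨a, ha⟩ ⟨w, hws⟩ := by
    intro w hw hws
    exact reach_of_walk (p.takeUntil w hw)
      (fun v hv => hp v (p.support_takeUntil_subset hw hv)) ha hws
  exact (key w hw hws).symm.trans (key z hz hzs)

/-- Escape lemma: a walk in `G − x` from a vertex of `D` to `t` can be turned into
a walk in `G` staying in `D ∪ {t}`, provided `D` is closed under adjacency in `G − {x,t}`. -/
lemma escape_lemma {x t : V} (D : Set V) (htD : t ∉ D) (htx : t ≠ x)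
    (hclosed : ∀ a b, a ∈ D → G.Adj a b → b ≠ x → b ≠ t → b ∈ D) :
    ∀ {a b : {w : V // w ≠ x}} (_ : (G.induce {w | w ≠ x}).Walk a b), b.val = t → a.val ∈ D →
      ∃ q : G.Walk a.val t, ∀ w ∈ q.support, w ∈ D ∨ w = t := by
  intro a b W
  induction W with
  | nil => exact fun hb h => absurd h (hb ▸ htD)
  | @cons a b _ h W ih =>
    intro hbt ha
    have hab : G.Adj a.val b.val := h
    by_cases hb : b.val = t
    · refine ⟨Walk.cons (hb ▸ hab) Walk.nil, ?_⟩
      intro w hw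
      simp only [Walk.support_cons, Walk.support_nil, List.mem_cons, List.not_mem_nil,
        or_false] at hw
      rcases hw with rfl | rfl
      · exact Or.inl ha
      · exact Or.inr rfl
    · have hbD : b.val ∈ D := hclosed a.val b.val ha hab b.property hb
      obtain ⟨q, hq⟩ := ih hbt hbD
      refine ⟨Walk.cons hab q, ?_⟩
      intro w hw
      rw [Walk.support_cons, List.mem_cons] at hw
      rcases hw with rfl | hw
      · exact Or.inl ha
      · exact hq w hw

end Aux

/-- If `G` is 2-connected and `C` is a longest cycle in `G`, then no two
consecutive vertices of `C` (i.e. endpoints of an edge of `C`) form a vertex cut: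
deleting them leaves a graph that is still preconnected. -/
theorem stmt_13 {V : Type*} [Fintype V] (G : SimpleGraph V) (h2 : TwoConnected G)
    (u : V) (c : G.Walk u u) (hc : c.IsCycle)
    (hmax : ∀ (w : V) (c' : G.Walk w w), c'.IsCycle → c'.length ≤ c.length)
    (x y : V) (hxy : s(x, y) ∈ c.edges) :
    (G.induce {w | w ≠ x ∧ w ≠ y}).Preconnected := by
  classical
  obtain ⟨hcard, hconn, hdel⟩ := h2
  set S : Set V := {w | w ≠ x ∧ w ≠ y} with hS
  intro a b
  by_contra hab
  have hadj : G.Adj x y := c.adj_of_mem_edges hxy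
  have hxny : x ≠ y := hadj.ne
  have hxmem : x ∈ c.support := c.fst_mem_support_of_mem_edges hxy
  set d : G.Walk x x := c.rotate x hxmem with hd_def
  have hd : d.IsCycle := hc.rotate hxmem
  have hde : s(x, y) ∈ d.edges := by
    have h1 := c.rotate_edges x hxmem
    rw [← hd_def] at h1
    exact h1.mem_iff.2 hxy
  have hdlen : d.length = c.length := by
    have h1 := congrArg Walk.length (c.take_spec hxmem)
    rw [Walk.length_append] at h1
    have h2 : d.length = (c.dropUntil x hxmem).length + (c.takeUntil x hxmem).length :=
      Walk.length_append _ _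
    omega
  have hdsupp : ∀ w, w ∈ d.support ↔ w ∈ c.support := by
    have hdperm := c.support_rotate x hxmem
    rw [← hd_def] at hdperm
    have hcnil : c ≠ Walk.nil := hc.ne_nil
    have hdnil : d ≠ Walk.nil := hd.ne_nil
    intro w
    constructor
    · intro hw
      rw [d.support_eq_cons, List.mem_cons] at hw
      rcases hw with rfl | hw
      · exact hxmem
      · rw [c.support_eq_cons, List.mem_cons]
        exact Or.inr (hdperm.mem_iff.1 hw)
    · intro hw
      rw [c.support_eq_cons, List.mem_cons] at hw
      rw [d.support_eq_cons, List.mem_cons]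
      rcases hw with rfl | hw
      · exact Or.inr (hdperm.mem_iff.2 (mem_tail_support_of_closed c hcnil))
      · exact Or.inr (hdperm.mem_iff.2 hw)
  obtain ⟨h1, p, hp, hpe, hplen, hpsub, hpsup⟩ := cycle_decomp d hd hde
  have hclen : 3 ≤ c.length := hc.three_le_length
  have hplen2 : 2 ≤ p.length := by omega
  -- extract the interior of p
  obtain ⟨v1, e1, p1, rfl⟩ := Walk.exists_eq_cons_of_ne hxny.symm p
  have hp1 : p1.IsPath ∧ y ∉ p1.support := by
    rw [Walk.cons_isPath_iff] at hp; exact hp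
  have hv1x : v1 ≠ x := by
    rintro rfl
    have hnil : p1 ≠ Walk.nil := by
      intro h
      rw [h] at hplen2
      simp at hplen2
    have := mem_tail_support_of_closed p1 hnil
    have hnodup := hp1.1.support_nodup
    rw [p1.support_eq_cons] at hnodup
    exact (List.nodup_cons.1 hnodup).1 this
  obtain ⟨v2, e2, p2, hp1r⟩ := Walk.exists_eq_cons_of_ne (Ne.symm hv1x) p1.reverse
  have hp2path : p2.IsPath ∧ x ∉ p2.support := by
    have := hp1.1.reverse
    rw [hp1r, Walk.cons_isPath_iff] at this
    exact this
  have hp1_supp : ∀ w, w ∈ p1.support ↔ (w = x ∨ w ∈ p2.support) := by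
    intro w
    rw [← List.mem_reverse, ← Walk.support_reverse, hp1r, Walk.support_cons, List.mem_cons]
  -- p2's support: interior vertices of the cycle
  have hp2S : ∀ w ∈ p2.support, w ∈ S := by
    intro w hw
    refine ⟨?_, ?_⟩
    · rintro rfl; exact hp2path.2 hw
    · rintro rfl; exact hp1.2 ((hp1_supp _).2 (Or.inr hw))
  have hp2c : ∀ w ∈ p2.support, w ∈ c.support := by
    intro w hw
    rw [← hdsupp]
    exact hpsub w (by rw [Walk.support_cons, List.mem_cons]
                      exact Or.inr ((hp1_supp w).2 (Or.inr hw)))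
  have hcs_p2 : ∀ w ∈ c.support, w ≠ x → w ≠ y → w ∈ p2.support := by
    intro w hw hwx hwy
    have : w ∈ (Walk.cons e1 p1).support := hpsup w ((hdsupp w).2 hw)
    rw [Walk.support_cons, List.mem_cons] at this
    rcases this with rfl | hw1
    · exact absurd rfl hwy
    · rcases (hp1_supp w).1 hw1 with rfl | hw2
      · exact absurd rfl hwx
      · exact hw2
  -- the interior vertex z := v2
  have hzmem : v2 ∈ p2.support := p2.start_mem_support
  have hzS : v2 ∈ S := hp2S v2 hzmem
  set zz : {w : V // w ∈ S} := ⟨v2, hzS⟩ with hzz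
  -- Claim 1: every interior cycle vertex reaches zz in G − {x,y}
  have hclaim1 : ∀ (w : V) (hws : w ∈ S), w ∈ c.support →
      (G.induce S).Reachable ⟨w, hws⟩ zz := by
    intro w hws hwc
    exact reach_of_mem_support p2 hp2S (hcs_p2 w hwc hws.1 hws.2) hzmem hws hzS
  -- the bad component
  set D : Set V := {w | ∃ hw : w ∈ S, ¬ (G.induce S).Reachable ⟨w, hw⟩ zz} with hD
  have hDS : ∀ w ∈ D, w ∈ S := fun w hw => hw.1
  have hxD : x ∉ D := fun h => (hDS x h).1 rfl
  have hyD : y ∉ D := fun h => (hDS y h).2 rfl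
  have hDc : ∀ w ∈ D, w ∉ c.support := by
    rintro w ⟨hws, hnr⟩ hwc
    exact hnr (hclaim1 w hws hwc)
  have hclosed : ∀ a b : V, a ∈ D → G.Adj a b → b ≠ x → b ≠ y → b ∈ D := by
    rintro a' b' ⟨haS, hnr⟩ hadj' hbx hby
    have hbS : b' ∈ S := ⟨hbx, hby⟩
    refine ⟨hbS, fun hr => hnr ?_⟩
    have hab' : (G.induce S).Adj ⟨a', haS⟩ ⟨b', hbS⟩ := hadj'
    exact hab'.reachable.trans hr
  -- one of a, b lies in D
  have hd0 : ∃ w, w ∈ D := by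
    by_contra h
    push_neg at h
    simp only [hD, Set.mem_setOf_eq, not_exists, not_not] at h
    have ha := h a.val a.property
    have hb := h b.val b.property
    exact hab (ha.trans hb.symm)
  obtain ⟨d0, hd0D⟩ := hd0
  have hd0x : d0 ≠ x := (hDS d0 hd0D).1
  have hd0y : d0 ≠ y := (hDS d0 hd0D).2
  -- walks avoiding x (to y) and avoiding y (to x)
  obtain ⟨W1⟩ := ((hdel x).preconnected ⟨d0, hd0x⟩ ⟨y, hxny.symm⟩ : _)
  obtain ⟨q1, hq1⟩ := escape_lemma D hyD hxny.symm
    (fun a' b' ha' hab' hbx hbt => hclosed a' b' ha' hab' hbx hbt) W1 rfl hd0D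
  obtain ⟨W2⟩ := ((hdel y).preconnected ⟨d0, hd0y⟩ ⟨x, hxny⟩ : _)
  obtain ⟨q2, hq2⟩ := escape_lemma D hxD hxny
    (fun a' b' ha' hab' hby hbt => hclosed a' b' ha' hab' hbt hby) W2 rfl hd0D
  -- build the bridging path from x to y
  set R : G.Walk x y := q2.reverse.append q1 with hR
  have hRsupp : ∀ w ∈ R.support, w ∈ D ∨ w = x ∨ w = y := by
    intro w hw
    rw [hR, Walk.mem_support_append_iff] at hw
    rcases hw with hw | hw
    · rw [Walk.support_reverse, List.mem_reverse] at hw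
      rcases hq2 w hw with h | h
      · exact Or.inl h
      · exact Or.inr (Or.inl h)
    · rcases hq1 w hw with h | h
      · exact Or.inl h
      · exact Or.inr (Or.inr h)
  have hRxy : s(x, y) ∉ R.edges := by
    intro h
    rw [hR, Walk.edges_append, List.mem_append] at h
    rcases h with h | h
    · rw [Walk.edges_reverse, List.mem_reverse] at h
      have := q2.snd_mem_support_of_mem_edges h
      rcases hq2 y this with h' | h'
      · exact hyD h'
      · exact hxny h'.symm
    · have := q1.fst_mem_support_of_mem_edges h
      rcases hq1 x this with h' | h'
      · exact hxD h'
      · exact hxny h'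
  have hRedge : ∀ e ∈ R.edges, ∃ w1 w2, e = s(w1, w2) ∧ w1 ∈ D := by
    intro e he
    induction e with
    | h w1 w2 =>
      have hadj'' : G.Adj w1 w2 := R.adj_of_mem_edges he
      have h1 := R.fst_mem_support_of_mem_edges he
      have h2 := R.snd_mem_support_of_mem_edges he
      rcases hRsupp w1 h1 with h1' | h1'
      · exact ⟨w1, w2, rfl, h1'⟩
      · rcases hRsupp w2 h2 with h2' | h2'
        · exact ⟨w2, w1, Sym2.eq_swap.symm, h2'⟩
        · -- both endpoints in {x,y}: edge must be s(x,y)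
          exfalso
          apply hRxy
          rcases h1' with rfl | rfl <;> rcases h2' with rfl | rfl
          · exact absurd rfl hadj''.ne
          · exact he
          · rwa [Sym2.eq_swap] at he
          · exact absurd rfl hadj''.ne
  set Q : G.Walk x y := R.bypass with hQ
  have hQpath : Q.IsPath := R.bypass_isPath
  have hQsupp : ∀ w ∈ Q.support, w ∈ D ∨ w = x ∨ w = y :=
    fun w hw => hRsupp w (R.support_bypass_subset hw)
  have hQedges : ∀ e ∈ Q.edges, e ∈ R.edges := fun e he => R.edges_bypass_subset he
  have hQxy : s(x, y) ∉ Q.edges := fun h => hRxy (hQedges _ h)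
  have hQlen : 2 ≤ Q.length := by
    obtain ⟨w1, ew, Q', hQ'⟩ := Walk.exists_eq_cons_of_ne hxny Q
    have hw1y : w1 ≠ y := by
      rintro rfl
      apply hQxy
      rw [hQ', Walk.edges_cons]
      exact List.mem_cons_self
    have : Q'.length ≠ 0 := fun h => hw1y (Walk.eq_of_length_eq_zero h)
    have := congrArg Walk.length hQ'
    simp only [Walk.length_cons] at this
    omega
  -- the new, longer cycle
  set cyc : G.Walk x x := Q.append (Walk.cons e1 p1) with hcyc
  have hQD_p_disj : ∀ w, w ∈ D → w ∈ (Walk.cons e1 p1).support → False := by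
    intro w hwD hwp
    exact hDc w hwD ((hdsupp w).1 (hpsub w hwp))
  have hcyc_cycle : cyc.IsCycle := by
    rw [Walk.isCycle_def]
    refine ⟨?_, ?_, ?_⟩
    · -- trail
      rw [Walk.isTrail_def, hcyc, Walk.edges_append, List.nodup_append]
      refine ⟨hQpath.isTrail.edges_nodup, hp.isTrail.edges_nodup, ?_⟩
      intro e heQ e' hep' hee
      subst e'
      obtain ⟨w1, w2, hew, hwD⟩ := hRedge e (hQedges e heQ)
      subst hew
      have hw1 := (Walk.cons e1 p1).fst_mem_support_of_mem_edges hep'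
      exact hQD_p_disj w1 hwD hw1
    · -- not nil
      intro h
      have := congrArg Walk.length h
      rw [hcyc, Walk.length_append] at this
      simp only [Walk.length_nil, Walk.length_cons] at this
      omega
    · -- support tail nodup
      have hQc : Q.support = x :: Q.support.tail := Q.support_eq_cons
      have htail : cyc.support.tail = Q.support.tail ++ (Walk.cons e1 p1).support.tail := by
        rw [hcyc, Walk.support_append, hQc]
        simp
      rw [htail, List.nodup_append]
      have hQnodup := hQpath.support_nodup
      rw [hQc, List.nodup_cons] at hQnodup
      refine ⟨hQnodup.2, ?_, ?_⟩
      · have := hp.support_nodup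
        rw [(Walk.cons e1 p1).support_eq_cons, List.nodup_cons] at this
        exact this.2
      · intro w hwQ w' hwp' hww
        subst w'
        -- w in Q.support.tail and in p-path support tail
        have hwQs : w ∈ Q.support := by rw [hQc]; exact List.mem_cons_of_mem _ hwQ
        have hwx : w ≠ x := fun h => hQnodup.1 (h ▸ hwQ)
        have hwy : w ≠ y := by
          rintro rfl
          have := hp.support_nodup
          rw [(Walk.cons e1 p1).support_eq_cons, List.nodup_cons] at this
          exact this.1 hwp'
        rcases hQsupp w hwQs with h | h | h
        · refine hQD_p_disj w h ?_
          rw [(Walk.cons e1 p1).support_eq_cons]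
          exact List.mem_cons_of_mem _ hwp'
        · exact hwx h
        · exact hwy h
  have hcyc_len : cyc.length = Q.length + p1.length + 1 := by
    rw [hcyc, Walk.length_append, Walk.length_cons]
    omega
  have hple : (Walk.cons e1 p1).length = p1.length + 1 := by simp
  have := hmax x cyc hcyc_cycle
  rw [hcyc_len] at this
  have hplen' : p1.length + 1 + 1 = c.length := by
    rw [← hdlen, ← hplen]
    simp
  omega
end

section
/- Let p ≥ 6 and let M be a matching in the complete graph K_p. Then any two edges of K_p - M lie on a common Hamiltonian cycle of K_p - M. -/
open List

namespace Stmt14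

set_option linter.unusedSectionVars false

variable {V : Type*} [DecidableEq V]

/-- the list of edges of a "chain" list -/
def chainEdges : List V → List (Sym2 V)
  | [] => []
  | [_] => []
  | x :: y :: r => s(x, y) :: chainEdges (y :: r)

@[simp] lemma chainEdges_cons₂ (x y : V) (r : List V) :
    chainEdges (x :: y :: r) = s(x, y) :: chainEdges (y :: r) := rfl

lemma mem_chainEdges_append (l₁ : List V) (u v : V) (l₂ : List V) :
    s(u,v) ∈ chainEdges (l₁ ++ u :: v :: l₂) := by
  induction l₁ with
  | nil => simp
  | cons x l₁ ih =>
    cases l₁ with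
    | nil => simp [chainEdges]
    | cons y l₁ => simpa [chainEdges] using Or.inr ih

lemma mem_of_mem_chainEdges {e : Sym2 V} {l : List V} (he : e ∈ chainEdges l) :
    ∀ w ∈ e, w ∈ l := by
  induction l with
  | nil => simp [chainEdges] at he
  | cons x l ih =>
    cases l with
    | nil => simp [chainEdges] at he
    | cons y r =>
      simp only [chainEdges_cons₂, List.mem_cons] at he
      rcases he with rfl | he
      · intro w hw
        rw [Sym2.mem_iff] at hw
        rcases hw with rfl | rfl <;> simp
      · intro w hw
        have := ih he w hw
        simp only [List.mem_cons] at this ⊢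
        tauto

lemma chainEdges_append_singleton {e : Sym2 V} {l : List V} (z : V)
    (he : e ∈ chainEdges (l ++ [z])) :
    e ∈ chainEdges l ∨ ∃ hl : l ≠ [], e = s(l.getLast hl, z) := by
  induction l with
  | nil => simp [chainEdges] at he
  | cons x l ih =>
    cases l with
    | nil =>
      simp only [List.nil_append, List.singleton_append, chainEdges_cons₂] at he
      simp only [chainEdges, List.mem_singleton] at he ⊢
      right
      exact ⟨by simp, by simpa using he⟩
    | cons y r =>
      simp only [List.cons_append, chainEdges_cons₂, List.mem_cons] at he
      rcases he with rfl | he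
      · left; simp
      · rcases ih he with h | ⟨hl, rfl⟩
        · left; simp only [chainEdges_cons₂, List.mem_cons]; right; exact h
        · right
          exact ⟨by simp, rfl⟩

lemma chainEdges_nodup_of_nodup {l : List V} (hl : l.Nodup) : (chainEdges l).Nodup := by
  induction l with
  | nil => simp [chainEdges]
  | cons x l ih =>
    cases l with
    | nil => simp [chainEdges]
    | cons y r =>
      simp only [chainEdges_cons₂, List.nodup_cons]
      constructor
      · intro hmem
        have hx : x ∈ y :: r := mem_of_mem_chainEdges hmem x (by simp)
        exact (List.nodup_cons.1 hl).1 hx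
      · exact ih (List.nodup_cons.1 hl).2

lemma chainEdges_cycle_nodup {a u : V} {l : List V} (hnd : (a :: u :: l).Nodup)
    (hl : l ≠ []) : (chainEdges (a :: u :: l ++ [a])).Nodup := by
  have h1 : (u :: l ++ [a]).Nodup := by
    have : a ∉ u :: l := (List.nodup_cons.1 hnd).1
    have h2 : (u :: l).Nodup := (List.nodup_cons.1 hnd).2
    rw [List.nodup_append]
    refine ⟨h2, by simp, ?_⟩
    intro x hx
    simp only [List.mem_singleton]
    rintro _ rfl rfl
    exact this hx
  refine List.nodup_cons.2 ⟨?_, chainEdges_nodup_of_nodup h1⟩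
  intro hmem
  have := chainEdges_append_singleton (l := u :: l) a hmem
  rcases this with h | ⟨h', heq⟩
  · have : a ∈ u :: l := mem_of_mem_chainEdges h a (by simp)
    exact (List.nodup_cons.1 hnd).1 this
  · rw [Sym2.eq_iff] at heq
    have hgl : (u :: l).getLast h' ∈ l := by
      rw [List.getLast_cons hl]
      exact List.getLast_mem hl
    rcases heq with ⟨rfl, h2⟩ | ⟨_, h3⟩
    · exact (List.nodup_cons.1 hnd).1 (by simp [hgl])
    · -- u = getLast
      have : u ∉ l := (List.nodup_cons.1 (List.nodup_cons.1 hnd).2).1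
      rw [← h3] at hgl
      exact this hgl

def mkWalk (G : SimpleGraph V) : (x z : V) → (L : List V) →
    List.Chain G.Adj x (L ++ [z]) → G.Walk x z
  | x, z, [], h => SimpleGraph.Walk.cons (List.isChain_cons_cons.1 h).1 SimpleGraph.Walk.nil
  | x, z, y :: L, h =>
    SimpleGraph.Walk.cons (by simp at h; exact (List.isChain_cons_cons.1 h).1)
      (mkWalk G y z L (by simp at h; exact (List.isChain_cons_cons.1 h).2))

lemma support_mkWalk (G : SimpleGraph V) (x z : V) (L : List V)
    (h : List.Chain G.Adj x (L ++ [z])) :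
    (mkWalk G x z L h).support = x :: (L ++ [z]) := by
  induction L generalizing x with
  | nil => simp [mkWalk]
  | cons y L ih => simp [mkWalk, ih]; exact ih _ _

lemma edges_mkWalk (G : SimpleGraph V) (x z : V) (L : List V)
    (h : List.Chain G.Adj x (L ++ [z])) :
    (mkWalk G x z L h).edges = chainEdges (x :: (L ++ [z])) := by
  induction L generalizing x with
  | nil => simp [mkWalk, chainEdges]
  | cons y L ih => simp [mkWalk, chainEdges, ih]; exact ih _ _

lemma chain_ne : ∀ (x : V) (l : List V) (z : V), (x :: l).Nodup → z ∉ l →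
    (l = [] → x ≠ z) → List.Chain (· ≠ ·) x (l ++ [z])
  | x, [], z, _, _, h3 => by exact List.Chain.cons (h3 rfl) List.Chain.nil
  | x, y :: l, z, h1, h2, _ => by
    refine List.Chain.cons ?_ (chain_ne y l z ?_ ?_ ?_)
    · exact fun h => (List.nodup_cons.1 h1).1 (h ▸ List.mem_cons_self)
    · exact (List.nodup_cons.1 h1).2
    · exact fun h => h2 (List.mem_cons_of_mem _ h)
    · rintro rfl h
      exact h2 (h ▸ List.mem_cons_self)

lemma chain_and {R S : V → V → Prop} : ∀ (x : V) (l : List V), List.Chain R x l →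
    List.Chain S x l → List.Chain (fun u v => R u v ∧ S u v) x l
  | _, [], _, _ => List.Chain.nil
  | x, y :: l, hr, hs => by
    replace hr := List.isChain_cons_cons.1 hr; replace hs := List.isChain_cons_cons.1 hs
    exact List.Chain.cons ⟨hr.1, hs.1⟩ (chain_and y l hr.2 hs.2)


lemma tail_cycle_nodup {a u : V} {l : List V} (hnd : (a :: u :: l).Nodup) :
    ((u :: l) ++ [a]).Nodup := by
  have ha : a ∉ u :: l := (List.nodup_cons.1 hnd).1
  have h2 : (u :: l).Nodup := (List.nodup_cons.1 hnd).2
  rw [List.nodup_append]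
  refine ⟨h2, by simp, ?_⟩
  intro x hx
  simp only [List.mem_singleton]
  rintro _ rfl rfl
  exact ha hx

lemma build_ham {G : SimpleGraph V} {a u : V} {l : List V}
    (hchain : List.Chain G.Adj a ((u :: l) ++ [a]))
    (hnd : (a :: u :: l).Nodup) (hl : l ≠ [])
    (hmem : ∀ v : V, v ∈ a :: u :: l) :
    ∃ c : G.Walk a a, c.IsHamiltonianCycle ∧ c.edges = chainEdges (a :: (u :: l ++ [a])) := by
  classical
  refine ⟨mkWalk G a a (u :: l) hchain, ?_, edges_mkWalk G a a (u :: l) hchain⟩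
  have hsupp := support_mkWalk G a a (u :: l) hchain
  have hedges := edges_mkWalk G a a (u :: l) hchain
  rw [SimpleGraph.Walk.isHamiltonianCycle_iff_isCycle_and_support_count_tail_eq_one]
  constructor
  · refine ⟨⟨⟨?_⟩, ?_⟩, ?_⟩
    · rw [hedges]
      exact chainEdges_cycle_nodup hnd hl
    · intro hnil
      have := congrArg List.length hsupp
      rw [hnil] at this
      simp at this
    · rw [hsupp]
      simpa using tail_cycle_nodup hnd
  · intro v
    rw [hsupp]
    simp only [List.tail_cons]
    refine List.count_eq_one_of_mem (tail_cycle_nodup hnd) ?_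
    have := hmem v
    rcases List.mem_cons.1 this with rfl | h
    · simp
    · exact List.mem_append_left _ h

section Comb
variable {M : Set (Sym2 V)}

lemma exists_R_left (PU : ∀ u v w : V, s(u,v) ∈ M → s(u,w) ∈ M → v = w)
    (S : Finset V) (x : V) (h2 : 2 ≤ S.card) : ∃ v ∈ S, s(x,v) ∉ M := by
  obtain ⟨u, hu, v, hv, huv⟩ := Finset.one_lt_card.1 (by omega : 1 < S.card)
  by_cases h : s(x,u) ∈ M
  · refine ⟨v, hv, fun h' => huv ?_⟩
    exact PU x u v h h'
  · exact ⟨u, hu, h⟩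

lemma exists_R_both (PU : ∀ u v w : V, s(u,v) ∈ M → s(u,w) ∈ M → v = w)
    (S : Finset V) (x z : V) (h3 : 3 ≤ S.card) :
    ∃ w ∈ S, s(x,w) ∉ M ∧ s(w,z) ∉ M := by
  have PU' : ∀ y y' : V, s(y,z) ∈ M → s(y',z) ∈ M → y = y' := by
    intro y y' h h'
    exact PU z y y' (Sym2.eq_swap ▸ h) (Sym2.eq_swap ▸ h')
  obtain ⟨u, hu⟩ := Finset.card_pos.1 (by omega : 0 < S.card)
  have herase : 2 ≤ (S.erase u).card := by
    rw [Finset.card_erase_of_mem hu]; omega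
  obtain ⟨v, hv, w, hw, hvw⟩ := Finset.one_lt_card.1 (by omega : 1 < (S.erase u).card)
  have hvS := Finset.mem_of_mem_erase hv
  have hwS := Finset.mem_of_mem_erase hw
  have hvu := Finset.ne_of_mem_erase hv
  have hwu := Finset.ne_of_mem_erase hw
  by_cases hxu : s(x,u) ∈ M
  · have hxv : s(x,v) ∉ M := fun h => hvu (PU x u v hxu h).symm
    have hxw : s(x,w) ∉ M := fun h => hwu (PU x u w hxu h).symm
    by_cases hvz : s(v,z) ∈ M
    · exact ⟨w, hwS, hxw, fun h => hvw (PU' v w hvz h)⟩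
    · exact ⟨v, hvS, hxv, hvz⟩
  · by_cases huz : s(u,z) ∈ M
    · have hvz : s(v,z) ∉ M := fun h => hvu (PU' v u h huz)
      have hwz : s(w,z) ∉ M := fun h => hwu (PU' w u h huz)
      by_cases hxv : s(x,v) ∈ M
      · exact ⟨w, hwS, fun h => hvw (PU x v w hxv h), hwz⟩
      · exact ⟨v, hvS, hxv, hvz⟩
    · exact ⟨u, hu, hxu, huz⟩

lemma key (PU : ∀ u v w : V, s(u,v) ∈ M → s(u,w) ∈ M → v = w)
    (hdiag : ∀ u : V, s(u,u) ∉ M) :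
    ∀ n : ℕ, 2 ≤ n → ∀ S : Finset V, S.card = n →
      (n = 2 → ∀ u ∈ S, ∀ v ∈ S, s(u,v) ∉ M) →
      ∀ x z : V, x ∉ S → z ∉ S → x ≠ z →
      ∃ L : List V, L.Nodup ∧ (∀ y, y ∈ L ↔ y ∈ S) ∧
        List.Chain (fun u v => s(u,v) ∉ M) x (L ++ [z]) := by
  intro n hn
  induction n, hn using Nat.le_induction with
  | base =>
    intro S hcard hnp x z hx hz hxz
    obtain ⟨u, v, huv, rfl⟩ := Finset.card_eq_two.1 hcard
    have np := hnp rfl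
    have hu : u ∈ ({u, v} : Finset V) := by simp
    have hv : v ∈ ({u, v} : Finset V) := by simp
    by_cases h1 : s(x,u) ∈ M
    · refine ⟨[v, u], by simp [huv.symm], by intro y; simp; try tauto, ?_⟩
      refine List.Chain.cons ?_ (List.Chain.cons ?_ (List.Chain.cons ?_ List.Chain.nil))
      · exact fun h => huv (PU x u v h1 h)
      · exact np v hv u hu
      · intro h
        exact hxz (PU u x z (Sym2.eq_swap ▸ h1) h)
    · by_cases h2 : s(v,z) ∈ M
      · refine ⟨[v, u], by simp [huv.symm], by intro y; simp; try tauto, ?_⟩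
        refine List.Chain.cons ?_ (List.Chain.cons ?_ (List.Chain.cons ?_ List.Chain.nil))
        · intro h
          exact hxz (PU v x z (Sym2.eq_swap ▸ h) h2)
        · exact np v hv u hu
        · intro h
          exact huv (PU z u v (Sym2.eq_swap ▸ h) (Sym2.eq_swap ▸ h2))
      · exact ⟨[u, v], by simp [huv], by intro y; simp; try tauto,
          List.Chain.cons h1 (List.Chain.cons (np u hu v hv) (List.Chain.cons h2 List.Chain.nil))⟩
  | succ n hn ih =>
    intro S hcard hnp x z hx hz hxz
    -- helper to finish given a first vertex
    have finish : ∀ v₁ ∈ S, s(x,v₁) ∉ M →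
        ((n = 2) → ∀ u ∈ S.erase v₁, ∀ v ∈ S.erase v₁, s(u,v) ∉ M) →
        ∃ L : List V, L.Nodup ∧ (∀ y, y ∈ L ↔ y ∈ S) ∧
          List.Chain (fun u v => s(u,v) ∉ M) x (L ++ [z]) := by
      intro v₁ hv₁ hRx hnp'
      obtain ⟨L, hLnd, hLmem, hLchain⟩ := ih (S.erase v₁)
        (by rw [Finset.card_erase_of_mem hv₁, hcard]; omega) hnp' v₁ z
        (Finset.notMem_erase _ _) (fun h => hz (Finset.mem_of_mem_erase h))
        (fun h => hz (h ▸ hv₁))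
      refine ⟨v₁ :: L, ?_, ?_, List.Chain.cons hRx hLchain⟩
      · refine List.nodup_cons.2 ⟨fun h => ?_, hLnd⟩
        exact Finset.notMem_erase v₁ S ((hLmem v₁).1 h)
      · intro y
        simp only [List.mem_cons, hLmem, Finset.mem_erase]
        constructor
        · rintro (rfl | ⟨_, h⟩)
          · exact hv₁
          · exact h
        · intro hy
          by_cases hyv : y = v₁
          · exact Or.inl hyv
          · exact Or.inr ⟨hyv, hy⟩
    rcases Nat.lt_or_ge n 3 with h3 | h3
    · -- n = 2, S.card = 3
      have hn2 : n = 2 := by omega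
      by_cases hpair : ∃ u ∈ S, ∃ v ∈ S, s(u,v) ∈ M
      · obtain ⟨u, hu, v, hv, huvM⟩ := hpair
        have huv : u ≠ v := fun h => hdiag u (h ▸ huvM)
        refine finish u hu ?_ ?_
        · intro h
          exact (fun hh => hh hv hx) (fun hv' hx' =>
            hx' ((PU u x v (Sym2.eq_swap ▸ h) huvM) ▸ hv'))
        · intro _ p hp q hq hpqM
          have hpu := Finset.ne_of_mem_erase hp
          have hqu := Finset.ne_of_mem_erase hq
          have hpS := Finset.mem_of_mem_erase hp
          have hqS := Finset.mem_of_mem_erase hq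
          have hpq : p ≠ q := fun h => hdiag p (h ▸ hpqM)
          have hvu' : v ≠ u := huv.symm
          have hvE : v ∈ S.erase u := Finset.mem_erase.2 ⟨hvu', hv⟩
          by_cases hvp : v = p
          · subst hvp
            exact hqu (PU v q u hpqM (Sym2.eq_swap ▸ huvM))
          · by_cases hvq : v = q
            · subst hvq
              exact hpu (PU v p u (Sym2.eq_swap ▸ hpqM) (Sym2.eq_swap ▸ huvM))
            · -- three distinct elements in a card-2 set
              have hsub : ({v, p, q} : Finset V) ⊆ S.erase u := by
                intro y hy
                simp only [Finset.mem_insert, Finset.mem_singleton] at hy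
                rcases hy with rfl | rfl | rfl
                · exact hvE
                · exact hp
                · exact hq
              have hc := Finset.card_le_card hsub
              rw [Finset.card_erase_of_mem hu, hcard] at hc
              rw [Finset.card_insert_of_notMem (by simp [hvp, hvq]),
                Finset.card_insert_of_notMem (by simp [hpq]),
                Finset.card_singleton] at hc
              omega
      · push_neg at hpair
        obtain ⟨v₁, hv₁, hRx⟩ := exists_R_left PU S x (by omega)
        refine finish v₁ hv₁ hRx ?_
        intro _ p hp q hq
        exact hpair p (Finset.mem_of_mem_erase hp) q (Finset.mem_of_mem_erase hq)
    · -- n ≥ 3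
      obtain ⟨v₁, hv₁, hRx⟩ := exists_R_left PU S x (by omega)
      refine finish v₁ hv₁ hRx ?_
      intro h
      omega

end Comb

section Main
variable {M : Set (Sym2 V)}

lemma adj_iff {u v : V} :
    ((⊤ : SimpleGraph V) \ SimpleGraph.fromEdgeSet M).Adj u v ↔ u ≠ v ∧ s(u,v) ∉ M := by
  simp only [SimpleGraph.sdiff_adj, SimpleGraph.top_adj, SimpleGraph.fromEdgeSet_adj]
  tauto

lemma chain_concat {R : V → V → Prop} {x y : V} {l₁ l₂ : List V}
    (h₁ : List.Chain R x (l₁ ++ [y])) (h₂ : List.Chain R y l₂) :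
    List.Chain R x (l₁ ++ y :: l₂) := by
  refine List.isChain_cons_split.2 ?_
  exact ⟨h₁, h₂⟩

lemma final [Fintype V] {a u : V} {l : List V}
    (hnd : (a :: u :: l).Nodup) (hl : l ≠ [])
    (hmem : ∀ v : V, v ∈ a :: u :: l)
    (hch : List.Chain (fun p q => s(p,q) ∉ M) a ((u :: l) ++ [a]))
    (e₁ e₂ : Sym2 V)
    (he₁ : e₁ ∈ chainEdges (a :: (u :: l ++ [a])))
    (he₂ : e₂ ∈ chainEdges (a :: (u :: l ++ [a]))) :
    ∃ (v : V) (c : ((⊤ : SimpleGraph V) \ SimpleGraph.fromEdgeSet M).Walk v v),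
      c.IsHamiltonianCycle ∧ e₁ ∈ c.edges ∧ e₂ ∈ c.edges := by
  have hne : List.Chain (· ≠ ·) a ((u :: l) ++ [a]) := by
    refine chain_ne a (u :: l) a hnd ?_ (by simp)
    exact (List.nodup_cons.1 hnd).1
  have hadj : List.Chain ((⊤ : SimpleGraph V) \ SimpleGraph.fromEdgeSet M).Adj a ((u :: l) ++ [a]) := by
    refine List.Chain.imp ?_ (chain_and a ((u :: l) ++ [a]) hch hne)
    intro p q hpq
    exact adj_iff.2 ⟨hpq.2, hpq.1⟩
  obtain ⟨c, hc, hce⟩ := build_ham hadj hnd hl hmem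
  refine ⟨a, c, hc, ?_, ?_⟩ <;> rw [hce]
  · exact he₁
  · exact he₂

lemma shared [Fintype V] (hcardV : 6 ≤ Fintype.card V)
    (PU : ∀ u v w : V, s(u,v) ∈ M → s(u,w) ∈ M → v = w)
    (hdiag : ∀ u : V, s(u,u) ∉ M)
    (x m y : V) (hxm : x ≠ m) (hmy : m ≠ y) (hxy : x ≠ y)
    (h1 : s(x,m) ∉ M) (h2 : s(m,y) ∉ M) :
    ∃ (v : V) (c : ((⊤ : SimpleGraph V) \ SimpleGraph.fromEdgeSet M).Walk v v),
      c.IsHamiltonianCycle ∧ s(x,m) ∈ c.edges ∧ s(m,y) ∈ c.edges := by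
  classical
  set S : Finset V := Finset.univ \ {x, m, y} with hS
  have hcard3 : ({x, m, y} : Finset V).card = 3 := by
    rw [Finset.card_insert_of_notMem (by simp [hxm, hxy]),
      Finset.card_insert_of_notMem (by simp [hmy]), Finset.card_singleton]
  have hScard : S.card = Fintype.card V - 3 := by
    rw [hS, Finset.card_sdiff_of_subset (Finset.subset_univ _), Finset.card_univ, hcard3]
  have hS3 : 3 ≤ S.card := by omega
  obtain ⟨L, hLnd, hLmem, hLch⟩ := key PU hdiag S.card (by omega) S rfl
    (by intro h; omega) y x (by simp [hS]) (by simp [hS]) (Ne.symm hxy)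
  have hLS : ∀ v ∈ L, v ∈ S := fun v hv => (hLmem v).1 hv
  have hLnotin : ∀ v ∈ L, v ≠ x ∧ v ≠ m ∧ v ≠ y := by
    intro v hv
    have := hLS v hv
    simp only [hS, Finset.mem_sdiff, Finset.mem_insert, Finset.mem_singleton] at this
    tauto
  have hLne : L ≠ [] := by
    intro h
    obtain ⟨w0, hw0⟩ := Finset.card_pos.1 (by omega : 0 < S.card)
    have := (hLmem w0).2 hw0
    rw [h] at this
    simp at this
  refine final (a := x) (u := m) (l := y :: L) ?_ (by simp) ?_ ?_ _ _ ?_ ?_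
  · -- nodup of x :: m :: y :: L
    simp only [List.nodup_cons, List.mem_cons]
    refine ⟨?_, ?_, ?_, hLnd⟩
    · push_neg
      exact ⟨hxm, hxy, fun h => (hLnotin x h).1 rfl⟩
    · push_neg
      exact ⟨hmy, fun h => (hLnotin m h).2.1 rfl⟩
    · exact fun h => (hLnotin y h).2.2 rfl
  · intro v
    by_cases hvx : v = x
    · simp [hvx]
    · by_cases hvm : v = m
      · simp [hvm]
      · by_cases hvy : v = y
        · simp [hvy]
        · have : v ∈ S := by simp [hS, hvx, hvm, hvy]
          simp [List.mem_cons, (hLmem v).2 this]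
  · -- chain
    refine List.Chain.cons h1 (List.Chain.cons h2 ?_)
    simpa using hLch
  · have heq : (x :: (m :: (y :: L) ++ [x])) = [] ++ x :: m :: (y :: L ++ [x]) := by simp
    rw [heq]
    exact mem_chainEdges_append [] x m _
  · have heq : (x :: (m :: (y :: L) ++ [x])) = [x] ++ m :: y :: (L ++ [x]) := by simp
    rw [heq]
    exact mem_chainEdges_append [x] m y _

end Main

section Disj
variable {M : Set (Sym2 V)} [Fintype V]

lemma disj_assemble
    (a b c d : V)
    (hab' : a ≠ b) (hac : a ≠ c) (had : a ≠ d) (hbc : b ≠ c) (hbd : b ≠ d) (hcd' : c ≠ d)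
    (hab : s(a,b) ∉ M) (hcd : s(c,d) ∉ M)
    (L₁ L₂ : List V) (hnd12 : (L₁ ++ L₂).Nodup)
    (hmem' : ∀ v : V, v ∈ (Finset.univ \ {a, b, c, d} : Finset V) ↔ v ∈ L₁ ++ L₂)
    (hch₁ : List.Chain (fun p q => s(p,q) ∉ M) b (L₁ ++ [c]))
    (hch₂ : List.Chain (fun p q => s(p,q) ∉ M) d (L₂ ++ [a])) :
    ∃ (v : V) (c' : ((⊤ : SimpleGraph V) \ SimpleGraph.fromEdgeSet M).Walk v v),
      c'.IsHamiltonianCycle ∧ s(a,b) ∈ c'.edges ∧ s(c,d) ∈ c'.edges := by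
  classical
  have hLS : ∀ v, v ∈ L₁ ++ L₂ → v ≠ a ∧ v ≠ b ∧ v ≠ c ∧ v ≠ d := by
    intro v hv
    have := (hmem' v).2 hv
    simp only [Finset.mem_sdiff, Finset.mem_univ, Finset.mem_insert,
      Finset.mem_singleton, true_and] at this
    tauto
  have hperm : (a :: b :: (L₁ ++ c :: d :: L₂)) ~ ([a, b, c, d] ++ (L₁ ++ L₂)) := by
    refine List.Perm.cons a (List.Perm.cons b ?_)
    calc L₁ ++ c :: d :: L₂ ~ c :: (L₁ ++ d :: L₂) := List.perm_middle
      _ ~ c :: d :: (L₁ ++ L₂) := List.Perm.cons c List.perm_middle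
      _ = [c, d] ++ (L₁ ++ L₂) := rfl
  have hnd : (a :: b :: (L₁ ++ c :: d :: L₂)).Nodup := by
    rw [hperm.nodup_iff]
    rw [List.nodup_append]
    refine ⟨by simp [hab', hac, had, hbc, hbd, hcd'], hnd12, ?_⟩
    rintro v hv _ hv2 rfl
    have := hLS v hv2
    simp only [List.mem_cons, List.mem_singleton, List.not_mem_nil, or_false] at hv
    rcases hv with rfl | rfl | rfl | rfl <;> tauto
  have hmem : ∀ v : V, v ∈ a :: b :: (L₁ ++ c :: d :: L₂) := by
    intro v
    rw [hperm.mem_iff]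
    by_cases hva : v = a; · simp [hva]
    by_cases hvb : v = b; · simp [hvb]
    by_cases hvc : v = c; · simp [hvc]
    by_cases hvd : v = d; · simp [hvd]
    have : v ∈ L₁ ++ L₂ := (hmem' v).1 (by simp [hva, hvb, hvc, hvd])
    simp only [List.mem_append] at this ⊢
    simp only [List.mem_cons]
    tauto
  refine final (a := a) (u := b) (l := L₁ ++ c :: d :: L₂) hnd (by simp) hmem ?_ _ _ ?_ ?_
  · -- chain
    have h2 : List.Chain (fun p q => s(p,q) ∉ M) c (d :: (L₂ ++ [a])) :=
      List.Chain.cons hcd hch₂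
    have h3 := chain_concat hch₁ h2
    refine List.Chain.cons hab ?_
    simpa using h3
  · have heq : (a :: (b :: (L₁ ++ c :: d :: L₂) ++ [a]))
        = [] ++ a :: b :: ((L₁ ++ c :: d :: L₂) ++ [a]) := by simp
    rw [heq]
    exact mem_chainEdges_append [] a b _
  · have heq : (a :: (b :: (L₁ ++ c :: d :: L₂) ++ [a]))
        = (a :: b :: L₁) ++ c :: d :: (L₂ ++ [a]) := by simp
    rw [heq]
    exact mem_chainEdges_append (a :: b :: L₁) c d _

end Disj

section DisjMain
variable {M : Set (Sym2 V)} [Fintype V]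

set_option maxHeartbeats 1000000 in
lemma disjoint_main (hcardV : 6 ≤ Fintype.card V)
    (PU : ∀ u v w : V, s(u,v) ∈ M → s(u,w) ∈ M → v = w)
    (hdiag : ∀ u : V, s(u,u) ∉ M)
    (a b c d : V)
    (hab' : a ≠ b) (hac : a ≠ c) (had : a ≠ d) (hbc : b ≠ c) (hbd : b ≠ d) (hcd' : c ≠ d)
    (hab : s(a,b) ∉ M) (hcd : s(c,d) ∉ M) :
    ∃ (v : V) (c' : ((⊤ : SimpleGraph V) \ SimpleGraph.fromEdgeSet M).Walk v v),
      c'.IsHamiltonianCycle ∧ s(a,b) ∈ c'.edges ∧ s(c,d) ∈ c'.edges := by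
  classical
  set S : Finset V := Finset.univ \ {a, b, c, d} with hS
  have hcard4 : ({a, b, c, d} : Finset V).card = 4 := by
    rw [Finset.card_insert_of_notMem (by simp [hab', hac, had]),
      Finset.card_insert_of_notMem (by simp [hbc, hbd]),
      Finset.card_insert_of_notMem (by simp [hcd']), Finset.card_singleton]
  have hScard : S.card = Fintype.card V - 4 := by
    rw [hS, Finset.card_sdiff_of_subset (Finset.subset_univ _), Finset.card_univ, hcard4]
  have hS2 : 2 ≤ S.card := by omega
  have hSne : ∀ v ∈ S, v ≠ a ∧ v ≠ b ∧ v ≠ c ∧ v ≠ d := by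
    intro v hv
    simp only [hS, Finset.mem_sdiff, Finset.mem_univ, Finset.mem_insert,
      Finset.mem_singleton, true_and] at hv
    tauto
  have haS : a ∉ S := by simp [hS]
  have hbS : b ∉ S := by simp [hS]
  have hcS : c ∉ S := by simp [hS]
  have hdS : d ∉ S := by simp [hS]
  -- the generic branch
  have general : (∀ w : V, (S.erase w).card = 2 →
      ∀ p ∈ S.erase w, ∀ q ∈ S.erase w, s(p,q) ∉ M) → 3 ≤ S.card →
      ∃ (v : V) (c' : ((⊤ : SimpleGraph V) \ SimpleGraph.fromEdgeSet M).Walk v v),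
        c'.IsHamiltonianCycle ∧ s(a,b) ∈ c'.edges ∧ s(c,d) ∈ c'.edges := by
    intro hnp2 hS3
    obtain ⟨w, hwS, hdw, hwa⟩ := exists_R_both PU S d a hS3
    have hwcard : (S.erase w).card = S.card - 1 := Finset.card_erase_of_mem hwS
    obtain ⟨L, hLnd, hLmem, hLch⟩ := key PU hdiag (S.erase w).card (by omega)
      (S.erase w) rfl (hnp2 w) b c
      (fun h => hbS (Finset.mem_of_mem_erase h))
      (fun h => hcS (Finset.mem_of_mem_erase h)) hbc
    refine disj_assemble a b c d hab' hac had hbc hbd hcd' hab hcd L [w] ?_ ?_ hLch ?_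
    · rw [List.nodup_append]
      refine ⟨hLnd, by simp, ?_⟩
      intro v hv
      simp only [List.mem_singleton]
      rintro b rfl hvw
      exact Finset.notMem_erase b S ((hLmem b).1 (hvw ▸ hv))
    · intro v
      rw [List.mem_append, List.mem_singleton, hLmem, Finset.mem_erase]
      constructor
      · intro hv
        by_cases hvw : v = w
        · exact Or.inr hvw
        · exact Or.inl ⟨hvw, hv⟩
      · rintro (⟨_, hv⟩ | rfl)
        · exact hv
        · exact hwS
    · exact List.Chain.cons hdw (List.Chain.cons hwa List.Chain.nil)
  rcases Nat.lt_or_ge S.card 3 with h2 | h3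
  · -- S.card = 2
    have hcard2 : S.card = 2 := by omega
    obtain ⟨u, v, huv, hSeq⟩ := Finset.card_eq_two.1 hcard2
    have huS : u ∈ S := by rw [hSeq]; simp
    have hvS : v ∈ S := by rw [hSeq]; simp
    by_cases huvM : s(u,v) ∈ M
    · -- direct : a b u c d v
      have hbu : s(b,u) ∉ M := fun h => (hSne v hvS).2.1 (PU u b v (Sym2.eq_swap ▸ h) huvM).symm
      have huc : s(u,c) ∉ M := fun h => (hSne v hvS).2.2.1 (PU u c v h huvM).symm
      have hdv : s(d,v) ∉ M :=
        fun h => (hSne u huS).2.2.2 (PU v d u (Sym2.eq_swap ▸ h) (Sym2.eq_swap ▸ huvM)).symm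
      have hva : s(v,a) ∉ M := fun h => (hSne u huS).1 (PU v a u h (Sym2.eq_swap ▸ huvM)).symm
      refine disj_assemble a b c d hab' hac had hbc hbd hcd' hab hcd [u] [v]
        (by simp [huv]) ?_ ?_ ?_
      · intro x
        rw [← hS, hSeq]
        simp
      · exact List.Chain.cons hbu (List.Chain.cons huc List.Chain.nil)
      · exact List.Chain.cons hdv (List.Chain.cons hva List.Chain.nil)
    · by_cases hda : s(d,a) ∈ M
      · by_cases hbcM : s(b,c) ∈ M
        · -- both junction edges matched: direct a b u c d v using partner uniqueness
          have hbu : s(b,u) ∉ M := fun h => (hSne u huS).2.2.1 (PU b u c h hbcM)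
          have huc : s(u,c) ∉ M :=
            fun h => (hSne u huS).2.1 (PU c u b (Sym2.eq_swap ▸ h) (Sym2.eq_swap ▸ hbcM))
          have hdv : s(d,v) ∉ M := fun h => (hSne v hvS).1 (PU d v a h hda)
          have hva : s(v,a) ∉ M :=
            fun h => (hSne v hvS).2.2.2 (PU a v d (Sym2.eq_swap ▸ h) (Sym2.eq_swap ▸ hda))
          refine disj_assemble a b c d hab' hac had hbc hbd hcd' hab hcd [u] [v]
            (by simp [huv]) ?_ ?_ ?_
          · intro x
            rw [← hS, hSeq]
            simp
          · exact List.Chain.cons hbu (List.Chain.cons huc List.Chain.nil)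
          · exact List.Chain.cons hdv (List.Chain.cons hva List.Chain.nil)
        · -- s(b,c) ∉ M : cycle a b c d L a
          obtain ⟨L, hLnd, hLmem, hLch⟩ := key PU hdiag S.card (by omega) S rfl
            (fun _ => by
              intro p hp q hq
              rw [hSeq] at hp hq
              simp only [Finset.mem_insert, Finset.mem_singleton] at hp hq
              rcases hp with rfl | rfl <;> rcases hq with rfl | rfl
              · exact hdiag _
              · exact huvM
              · exact fun h => huvM (Sym2.eq_swap ▸ h)
              · exact hdiag _) d a hdS haS (Ne.symm had)
          refine disj_assemble a b c d hab' hac had hbc hbd hcd' hab hcd [] L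
            (by simpa using hLnd) ?_ ?_ hLch
          · intro x
            rw [← hS]
            simp [hLmem]
          · exact List.Chain.cons hbcM List.Chain.nil
      · -- s(d,a) ∉ M : cycle a b L c d a
        obtain ⟨L, hLnd, hLmem, hLch⟩ := key PU hdiag S.card (by omega) S rfl
          (fun _ => by
            intro p hp q hq
            rw [hSeq] at hp hq
            simp only [Finset.mem_insert, Finset.mem_singleton] at hp hq
            rcases hp with rfl | rfl <;> rcases hq with rfl | rfl
            · exact hdiag _
            · exact huvM
            · exact fun h => huvM (Sym2.eq_swap ▸ h)
            · exact hdiag _) b c hbS hcS hbc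
        refine disj_assemble a b c d hab' hac had hbc hbd hcd' hab hcd L []
          (by simpa using hLnd) ?_ hLch ?_
        · intro x
          rw [← hS]
          simp [hLmem]
        · exact List.Chain.cons hda List.Chain.nil
  · -- 3 ≤ S.card
    by_cases h4 : 4 ≤ S.card
    · exact general (fun w hw => by
        exfalso
        by_cases hwS : w ∈ S
        · have := Finset.card_erase_of_mem hwS
          omega
        · rw [Finset.erase_eq_of_notMem hwS] at hw
          omega) h3
    · have hcard3 : S.card = 3 := by omega
      by_cases hpair : ∃ u ∈ S, ∃ v ∈ S, s(u,v) ∈ M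
      · obtain ⟨u, hu, v, hv, huvM⟩ := hpair
        have huv : u ≠ v := fun h => hdiag u (h ▸ huvM)
        have hvE : v ∈ S.erase u := Finset.mem_erase.2 ⟨huv.symm, hv⟩
        have hcard1 : ((S.erase u).erase v).card = 1 := by
          rw [Finset.card_erase_of_mem hvE, Finset.card_erase_of_mem hu]
          omega
        obtain ⟨w, hwE⟩ := Finset.card_eq_one.1 hcard1
        have hw : w ∈ (S.erase u).erase v := by rw [hwE]; simp
        have hwv : w ≠ v := Finset.ne_of_mem_erase hw
        have hwu : w ≠ u := Finset.ne_of_mem_erase (Finset.mem_of_mem_erase hw)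
        have hwS : w ∈ S := Finset.mem_of_mem_erase (Finset.mem_of_mem_erase hw)
        have hSeq : ({u, v, w} : Finset V) = S := by
          refine Finset.eq_of_subset_of_card_le ?_ ?_
          · intro x hx
            simp only [Finset.mem_insert, Finset.mem_singleton] at hx
            rcases hx with rfl | rfl | rfl
            · exact hu
            · exact hv
            · exact hwS
          · rw [hcard3, Finset.card_insert_of_notMem (by simp [huv, Ne.symm hwu]),
              Finset.card_insert_of_notMem (by simp [Ne.symm hwv]), Finset.card_singleton]
        have hbu : s(b,u) ∉ M := fun h => (hSne v hv).2.1 (PU u b v (Sym2.eq_swap ▸ h) huvM).symm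
        have huc : s(u,c) ∉ M := fun h => (hSne v hv).2.2.1 (PU u c v h huvM).symm
        by_cases hdw : s(d,w) ∈ M
        · -- cycle a b u c d v w a
          have hdv : s(d,v) ∉ M := fun h => hwv (PU d v w h hdw).symm
          have hvw : s(v,w) ∉ M := fun h => hwu (PU v w u h (Sym2.eq_swap ▸ huvM))
          have hwa : s(w,a) ∉ M := fun h => had (PU w a d h (Sym2.eq_swap ▸ hdw))
          refine disj_assemble a b c d hab' hac had hbc hbd hcd' hab hcd [u] [v, w]
            (by simp [huv, Ne.symm hwu, Ne.symm hwv]) ?_ ?_ ?_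
          · intro x
            rw [← hS, ← hSeq]
            simp
          · exact List.Chain.cons hbu (List.Chain.cons huc List.Chain.nil)
          · exact List.Chain.cons hdv (List.Chain.cons hvw (List.Chain.cons hwa List.Chain.nil))
        · -- cycle a b u c d w v a
          have hwv' : s(w,v) ∉ M := fun h => hwu (PU v w u (Sym2.eq_swap ▸ h) (Sym2.eq_swap ▸ huvM))
          have hva : s(v,a) ∉ M := fun h => (hSne u hu).1 (PU v a u h (Sym2.eq_swap ▸ huvM)).symm
          refine disj_assemble a b c d hab' hac had hbc hbd hcd' hab hcd [u] [w, v]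
            (by simp [huv, Ne.symm hwu, hwv]) ?_ ?_ ?_
          · intro x
            rw [← hS, ← hSeq]
            simp only [Finset.mem_insert, Finset.mem_singleton, List.cons_append,
              List.nil_append, List.mem_cons, List.not_mem_nil, or_false]
            tauto
          · exact List.Chain.cons hbu (List.Chain.cons huc List.Chain.nil)
          · exact List.Chain.cons hdw (List.Chain.cons hwv' (List.Chain.cons hva List.Chain.nil))
      · push_neg at hpair
        exact general (fun w _ p hp q hq =>
          hpair p (Finset.mem_of_mem_erase hp) q (Finset.mem_of_mem_erase hq)) h3

end DisjMain

end Stmt14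

open Stmt14 in
/-- Let `p ≥ 6` and let `M` be a matching in `K_p` (a set of pairwise disjoint
non-loop edges).  Then any two distinct edges of `K_p - M` lie on a common
hamiltonian cycle of `K_p - M`. -/
theorem stmt_14 (p : ℕ) (hp : 6 ≤ p) (M : Set (Sym2 (Fin p)))
    (hM : ∀ e ∈ M, ¬ e.IsDiag)
    (hdisj : ∀ e ∈ M, ∀ f ∈ M, e ≠ f → ∀ x : Fin p, x ∈ e → x ∉ f)
    (e₁ e₂ : Sym2 (Fin p))
    (h1 : e₁ ∈ ((⊤ : SimpleGraph (Fin p)) \ SimpleGraph.fromEdgeSet M).edgeSet)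
    (h2 : e₂ ∈ ((⊤ : SimpleGraph (Fin p)) \ SimpleGraph.fromEdgeSet M).edgeSet)
    (hne : e₁ ≠ e₂) :
    ∃ (v : Fin p) (c : ((⊤ : SimpleGraph (Fin p)) \ SimpleGraph.fromEdgeSet M).Walk v v),
      c.IsHamiltonianCycle ∧ e₁ ∈ c.edges ∧ e₂ ∈ c.edges := by
  classical
  have hcardV : 6 ≤ Fintype.card (Fin p) := by simpa using hp
  have PU : ∀ u v w : Fin p, s(u,v) ∈ M → s(u,w) ∈ M → v = w := by
    intro u v w hv hw
    by_cases heq : s(u,v) = s(u,w)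
    · rw [Sym2.eq_iff] at heq
      rcases heq with ⟨_, h⟩ | ⟨h1', h2'⟩
      · exact h
      · rw [h2', h1']
    · exact absurd (Sym2.mem_mk_left u w) (hdisj _ hv _ hw heq u (Sym2.mem_mk_left u v))
  have hdiag : ∀ u : Fin p, s(u,u) ∉ M := by
    intro u h
    exact hM _ h (by simp)
  revert h1 hne
  induction e₁ using Sym2.ind with
  | _ a b =>
  intro h1 hne
  revert h2 hne
  induction e₂ using Sym2.ind with
  | _ c d =>
  intro h2 hne
  rw [SimpleGraph.mem_edgeSet, adj_iff] at h1 h2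
  obtain ⟨hab', hab⟩ := h1
  obtain ⟨hcd', hcd⟩ := h2
  by_cases hca : c = a
  · subst hca
    have hbd : b ≠ d := by
      rintro rfl
      exact hne rfl
    have hcd2 : c ≠ d := hcd'
    obtain ⟨v, w, hw, he1, he2⟩ := shared hcardV PU hdiag b c d (Ne.symm hab') hcd' hbd
      (Sym2.eq_swap ▸ hab) hcd
    exact ⟨v, w, hw, Sym2.eq_swap ▸ he1, he2⟩
  · by_cases hcb : c = b
    · subst hcb
      have had2 : a ≠ d := by
        rintro rfl
        exact hne Sym2.eq_swap
      obtain ⟨v, w, hw, he1, he2⟩ := shared hcardV PU hdiag a c d hab' hcd' had2 hab hcd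
      exact ⟨v, w, hw, he1, he2⟩
    · by_cases hda : d = a
      · subst hda
        have hbc2 : b ≠ c := fun h => hcb h.symm
        obtain ⟨v, w, hw, he1, he2⟩ := shared hcardV PU hdiag b d c (Ne.symm hab')
          (fun h => hca h.symm) hbc2 (Sym2.eq_swap ▸ hab) (Sym2.eq_swap ▸ hcd)
        exact ⟨v, w, hw, Sym2.eq_swap ▸ he1, Sym2.eq_swap ▸ he2⟩
      · by_cases hdb : d = b
        · subst hdb
          have hac2 : a ≠ c := fun h => hca h.symm
          obtain ⟨v, w, hw, he1, he2⟩ := shared hcardV PU hdiag a d c hab'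
            (fun h => hcb h.symm) hac2 hab (Sym2.eq_swap ▸ hcd)
          exact ⟨v, w, hw, he1, Sym2.eq_swap ▸ he2⟩
        · exact disjoint_main hcardV PU hdiag a b c d hab' (fun h => hca h.symm)
            (fun h => hda h.symm) (fun h => hcb h.symm) (fun h => hdb h.symm) hcd' hab hcd
end
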